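/- arXiv:1606.06536 — 4 statements merged into one kernel-verified Lean document; each statement's English description precedes it below -/
import Mathlib

section
/- Let φ(λ) = ((α+1)/α)·∑_{k≥1} λ^k/((k+1)!·k) for α > 0, and let ξ be an infinitely divisible random variable with E[e^{λξ}] = e^{φ(λ)} for all λ ∈ ℝ (its Lévy measure is ((α+1)/α)·(1−u)/u du on (0,1]). Then for all c < 1, e^{c·x·ln x}·P(ξ > x) → 0 as x → ∞, and for all c > 1, e^{c·x·ln x}·P(ξ > x) → ∞ as x → ∞. -/
open MeasureTheory ProbabilityTheory Filter Real

namespace Stmt8Aux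

noncomputable def S (lam : ℝ) : ℝ :=
  ∑' k : ℕ, lam ^ (k + 1) / ((Nat.factorial (k + 2) : ℝ) * (k + 1))

noncomputable def T (b : ℝ) : ℝ := ∑' k : ℕ, b ^ k / (Nat.factorial (k + 2) : ℝ)

lemma exp_tsum (x : ℝ) : Real.exp x = ∑' n : ℕ, x ^ n / (Nat.factorial n : ℝ) := by
  rw [Real.exp_eq_exp_ℝ, NormedSpace.exp_eq_tsum_div]

lemma summable_exp_series (x : ℝ) : Summable (fun n : ℕ => x ^ n / (Nat.factorial n : ℝ)) :=
  Real.summable_pow_div_factorial x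

lemma summable_T (b : ℝ) (hb : 0 ≤ b) :
    Summable (fun k : ℕ => b ^ k / (Nat.factorial (k + 2) : ℝ)) := by
  refine Summable.of_nonneg_of_le (fun k => by positivity) (fun k => ?_) (summable_exp_series b)
  have h1 : (Nat.factorial k : ℝ) ≤ (Nat.factorial (k + 2) : ℝ) := by
    exact_mod_cast Nat.factorial_le (by omega)
  gcongr

lemma summable_S (lam : ℝ) (hlam : 0 ≤ lam) :
    Summable (fun k : ℕ => lam ^ (k + 1) / ((Nat.factorial (k + 2) : ℝ) * (k + 1))) := by
  have hs : Summable (fun k : ℕ => lam ^ (k + 1) / (Nat.factorial (k + 1) : ℝ)) :=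
    (summable_nat_add_iff 1).mpr (summable_exp_series lam)
  refine Summable.of_nonneg_of_le (fun k => by positivity) (fun k => ?_) hs
  have h1 : (Nat.factorial (k + 1) : ℝ) ≤ (Nat.factorial (k + 2) : ℝ) * (k + 1) := by
    have : (Nat.factorial (k+1) : ℝ) ≤ (Nat.factorial (k + 2) : ℝ) := by
      exact_mod_cast Nat.factorial_le (by omega)
    have hk : (0:ℝ) ≤ (k:ℝ) := Nat.cast_nonneg k
    have hf : (0:ℝ) < (Nat.factorial (k+1) : ℝ) := by exact_mod_cast Nat.factorial_pos (k+1)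
    nlinarith
  gcongr

lemma T_eq (b : ℝ) (hb : 0 < b) : T b = (Real.exp b - 1 - b) / b ^ 2 := by
  have hs := summable_exp_series b
  have h2 := Summable.sum_add_tsum_nat_add 2 hs
  have h3 : (fun k : ℕ => b ^ (k + 2) / (Nat.factorial (k + 2) : ℝ)) =
      fun k : ℕ => b ^ 2 * (b ^ k / (Nat.factorial (k + 2) : ℝ)) := by
    funext k; rw [pow_add]; ring
  rw [Finset.sum_range_succ, Finset.sum_range_one] at h2
  simp only [pow_zero, Nat.factorial_zero, pow_one, Nat.factorial_one, Nat.cast_one] at h2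
  rw [h3] at h2
  rw [tsum_mul_left] at h2
  rw [← exp_tsum] at h2
  have hb2 : b ^ 2 ≠ 0 := by positivity
  field_simp [T]
  rw [T]; nlinarith [h2]

lemma S_nonneg (lam : ℝ) (hlam : 0 ≤ lam) : 0 ≤ S lam :=
  tsum_nonneg fun k => by positivity

lemma S_le_exp (lam : ℝ) (hlam : 0 ≤ lam) : S lam ≤ Real.exp lam := by
  rw [exp_tsum, S]
  refine Summable.tsum_le_tsum_of_inj (fun k => k + 1) (fun a b h => by simpa using h)
    (fun c _ => by positivity) (fun k => ?_) (summable_S lam hlam) (summable_exp_series lam)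
  have h1 : (Nat.factorial (k + 1) : ℝ) ≤ (Nat.factorial (k + 2) : ℝ) * (k + 1) := by
    have : (Nat.factorial (k+1) : ℝ) ≤ (Nat.factorial (k + 2) : ℝ) := by
      exact_mod_cast Nat.factorial_le (by omega)
    have hk : (0:ℝ) ≤ (k:ℝ) := Nat.cast_nonneg k
    have hf : (0:ℝ) < (Nat.factorial (k+1) : ℝ) := by exact_mod_cast Nat.factorial_pos (k+1)
    nlinarith
  gcongr

lemma pow_sub_pow_bounds (x h : ℝ) (hh : 0 ≤ h) (hhx : h ≤ x) (n : ℕ) :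
    ((n : ℝ) + 1) * h * (x - h) ^ n ≤ x ^ (n + 1) - (x - h) ^ (n + 1) ∧
      x ^ (n + 1) - (x - h) ^ (n + 1) ≤ ((n : ℝ) + 1) * h * x ^ n := by
  have hx0 : 0 ≤ x := le_trans hh hhx
  have hxh : 0 ≤ x - h := by linarith
  induction n with
  | zero => simp
  | succ n ih =>
    obtain ⟨ih1, ih2⟩ := ih
    have hple : (x - h) ^ n ≤ x ^ n := pow_le_pow_left₀ hxh (by linarith) n
    have hple1 : (x - h) ^ (n + 1) ≤ x ^ (n + 1) := pow_le_pow_left₀ hxh (by linarith) (n + 1)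
    have key : x ^ (n + 2) - (x - h) ^ (n + 2) =
        x * (x ^ (n + 1) - (x - h) ^ (n + 1)) + h * (x - h) ^ (n + 1) := by ring
    constructor
    · have t1 : x * (((n : ℝ) + 1) * h * (x - h) ^ n) ≤
          x * (x ^ (n + 1) - (x - h) ^ (n + 1)) := mul_le_mul_of_nonneg_left ih1 hx0
      have t2 : (x - h) * (((n : ℝ) + 1) * h * (x - h) ^ n) ≤
          x * (((n : ℝ) + 1) * h * (x - h) ^ n) := by
        apply mul_le_mul_of_nonneg_right (by linarith)
        positivity
      have e1 : (x - h) * (((n : ℝ) + 1) * h * (x - h) ^ n) =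
          ((n : ℝ) + 1) * h * (x - h) ^ (n + 1) := by ring
      have e2 : ((n : ℝ) + 1) * h * (x - h) ^ (n + 1) + h * (x - h) ^ (n + 1) =
          ((n : ℝ) + 1 + 1) * h * (x - h) ^ (n + 1) := by ring
      push_cast
      linarith [t1, t2, key, e1, e2]
    · have t1 : x * (x ^ (n + 1) - (x - h) ^ (n + 1)) ≤
          x * (((n : ℝ) + 1) * h * x ^ n) := mul_le_mul_of_nonneg_left ih2 hx0
      have t3 : h * (x - h) ^ (n + 1) ≤ h * x ^ (n + 1) :=
        mul_le_mul_of_nonneg_left hple1 hh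
      have e2 : x * (((n : ℝ) + 1) * h * x ^ n) + h * x ^ (n + 1) =
          ((n : ℝ) + 1 + 1) * h * x ^ (n + 1) := by ring
      push_cast
      linarith [t1, t3, key, e2]


lemma S_incr_upper (a h : ℝ) (ha : 0 ≤ a) (hh : 0 ≤ h) :
    S (a + h) - S a ≤ h * T (a + h) := by
  have hah : 0 ≤ a + h := by linarith
  have hs1 := summable_S (a + h) hah
  have hs2 := summable_S a ha
  have hsT := (summable_T (a + h) hah).mul_left h
  rw [S, S, T, ← Summable.tsum_sub hs1 hs2, ← tsum_mul_left]
  refine Summable.tsum_le_tsum (fun k => ?_) (hs1.sub hs2) hsT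
  have hD : (0:ℝ) < (Nat.factorial (k + 2) : ℝ) * (k + 1) := by positivity
  have hb := (pow_sub_pow_bounds (a + h) h hh (by linarith) k).2
  simp only [add_sub_cancel_right] at hb
  rw [div_sub_div_same, div_le_iff₀ hD]
  have hfac : (0:ℝ) < (Nat.factorial (k + 2) : ℝ) := by positivity
  calc (a + h) ^ (k + 1) - a ^ (k + 1) ≤ ((k : ℝ) + 1) * h * (a + h) ^ k := hb
    _ = h * ((a + h) ^ k / (Nat.factorial (k + 2) : ℝ)) * ((Nat.factorial (k + 2) : ℝ) * ((k:ℝ) + 1)) := by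
        field_simp

lemma S_incr_lower (a h : ℝ) (hh : 0 ≤ h) (hha : h ≤ a) :
    h * T (a - h) ≤ S a - S (a - h) := by
  have ha : 0 ≤ a := le_trans hh hha
  have hah : 0 ≤ a - h := by linarith
  have hs1 := summable_S a ha
  have hs2 := summable_S (a - h) hah
  have hsT := (summable_T (a - h) hah).mul_left h
  rw [S, S, T, ← Summable.tsum_sub hs1 hs2, ← tsum_mul_left]
  refine Summable.tsum_le_tsum (fun k => ?_) hsT (hs1.sub hs2)
  have hD : (0:ℝ) < (Nat.factorial (k + 2) : ℝ) * (k + 1) := by positivity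
  have hb := (pow_sub_pow_bounds a h hh hha k).1
  rw [div_sub_div_same, le_div_iff₀ hD]
  have hfac : (0:ℝ) < (Nat.factorial (k + 2) : ℝ) := by positivity
  calc h * ((a - h) ^ k / (Nat.factorial (k + 2) : ℝ)) * ((Nat.factorial (k + 2) : ℝ) * ((k:ℝ) + 1))
      = ((k : ℝ) + 1) * h * (a - h) ^ k := by field_simp
    _ ≤ a ^ (k + 1) - (a - h) ^ (k + 1) := hb


lemma S_eq (lam : ℝ) :
    S lam = ∑' k : ℕ, lam ^ (k + 1) / ((Nat.factorial (k + 2) : ℝ) * (k + 1)) := rfl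

attribute [irreducible] S T

set_option maxHeartbeats 1000000 in
lemma lamA_bound (K δ c' x L lam h : ℝ) (hK : 0 < K) (hδ0 : 0 < δ) (hδ1 : δ ≤ 1/8)
    (hx1 : 1 ≤ x) (hL3 : 3 ≤ L) (hlamL : L ≤ lam) (hlamle : lam ≤ (1 + δ/16) * L)
    (hh_def : h = 1 / lam) (hhlog : Real.exp h ≤ 1 + δ)
    (hexp_lam : K * Real.exp lam = x * L ^ 2 * (1 + δ))
    (h8L : 8 * L ≤ δ / 8 * x) (hc' : 1 + 4 * δ ≤ c') :
    lam * ((K * S (lam + h) - K * S lam + 2) / h) ≤ c' * (x * L) := by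
  have hlampos : (0:ℝ) < lam := by linarith
  have hh0 : 0 < h := by rw [hh_def]; positivity
  have hTub : T (lam + h) ≤ Real.exp lam * (1 + δ) / lam ^ 2 := by
    rw [T_eq _ (by linarith : (0:ℝ) < lam + h)]
    have hexph : Real.exp (lam + h) ≤ Real.exp lam * (1 + δ) := by
      rw [Real.exp_add]
      nlinarith [Real.exp_pos lam]
    calc (Real.exp (lam + h) - 1 - (lam + h)) / (lam + h) ^ 2
        ≤ Real.exp (lam + h) / (lam + h) ^ 2 :=
          (div_le_div_iff_of_pos_right (by positivity)).mpr (by linarith)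
      _ ≤ Real.exp (lam + h) / lam ^ 2 :=
          div_le_div_of_nonneg_left (Real.exp_pos _).le (pow_pos hlampos 2) (by nlinarith)
      _ ≤ Real.exp lam * (1 + δ) / lam ^ 2 :=
          (div_le_div_iff_of_pos_right (by positivity)).mpr hexph
  have hAub : (K * S (lam + h) - K * S lam + 2) / h ≤ K * T (lam + h) + 2 * lam := by
    have hstep := S_incr_upper lam h (by linarith) hh0.le
    have hnum : K * S (lam + h) - K * S lam + 2 ≤ h * (K * T (lam + h)) + 2 := by nlinarith
    calc (K * S (lam + h) - K * S lam + 2) / h ≤ (h * (K * T (lam + h)) + 2) / h :=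
          (div_le_div_iff_of_pos_right hh0).mpr hnum
      _ = K * T (lam + h) + 2 * lam := by rw [hh_def]; field_simp
  have h1 : K * T (lam + h) ≤ x * L ^ 2 * (1 + δ) ^ 2 / lam ^ 2 := by
    calc K * T (lam + h) ≤ K * (Real.exp lam * (1 + δ) / lam ^ 2) :=
          mul_le_mul_of_nonneg_left hTub hK.le
      _ = x * L ^ 2 * (1 + δ) ^ 2 / lam ^ 2 := by
          rw [show K * (Real.exp lam * (1 + δ) / lam ^ 2) =
            (K * Real.exp lam) * (1 + δ) / lam ^ 2 by ring, hexp_lam]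
          ring
  have h3 : lam * (x * L ^ 2 * (1 + δ) ^ 2 / lam ^ 2) = x * L ^ 2 * (1 + δ) ^ 2 / lam := by
    field_simp
  have h4 : x * L ^ 2 * (1 + δ) ^ 2 / lam ≤ x * L * (1 + δ) ^ 2 := by
    rw [div_le_iff₀ hlampos]
    have hL2 : L ^ 2 ≤ L * lam := by nlinarith
    nlinarith [mul_le_mul_of_nonneg_left hL2 (show (0:ℝ) ≤ x * (1 + δ) ^ 2 by positivity)]
  have h5 : 2 * lam ^ 2 ≤ δ * x * L := by
    have hlam2L : lam ≤ 2 * L := by nlinarith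
    have e1 : lam ^ 2 ≤ 4 * L ^ 2 := by nlinarith
    have e2 : 8 * L * L ≤ δ / 8 * x * L := mul_le_mul_of_nonneg_right h8L (by linarith)
    have e4 : 0 ≤ δ * x * L := by positivity
    linarith [e1, e2, e4]
  have h6 : x * L * (1 + δ) ^ 2 + δ * x * L ≤ c' * (x * L) := by
    have hxL : (0:ℝ) < x * L := by nlinarith
    have e3 : (1 + δ) ^ 2 + δ ≤ c' := by nlinarith
    nlinarith [mul_le_mul_of_nonneg_right e3 hxL.le]
  have h2 : lam * ((K * S (lam + h) - K * S lam + 2) / h) ≤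
      lam * (x * L ^ 2 * (1 + δ) ^ 2 / lam ^ 2 + 2 * lam) := by
    apply mul_le_mul_of_nonneg_left _ hlampos.le
    linarith
  calc lam * ((K * S (lam + h) - K * S lam + 2) / h)
      ≤ lam * (x * L ^ 2 * (1 + δ) ^ 2 / lam ^ 2 + 2 * lam) := h2
    _ = lam * (x * L ^ 2 * (1 + δ) ^ 2 / lam ^ 2) + 2 * lam ^ 2 := by ring
    _ = x * L ^ 2 * (1 + δ) ^ 2 / lam + 2 * lam ^ 2 := by rw [h3]
    _ ≤ x * L * (1 + δ) ^ 2 + δ * x * L := by linarith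
    _ ≤ c' * (x * L) := h6

set_option maxHeartbeats 1000000 in
lemma B_bound (K δ x L lam h : ℝ) (hK : 0 < K) (hδ0 : 0 < δ) (hδ1 : δ ≤ 1/8)
    (hx1 : 1 ≤ x) (hL3 : 3 ≤ L) (hlamL : L ≤ lam) (hlamle : lam ≤ (1 + δ/16) * L)
    (hh_def : h = 1 / lam) (hhδ4 : h ≤ δ/4)
    (hexp_lam : K * Real.exp lam = x * L ^ 2 * (1 + δ))
    (h8L : 8 * L ≤ δ / 8 * x) (h2K : 2 * K ≤ δ / 8 * x) :
    x < (K * S lam - K * S (lam - h) - 2) / h := by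
  have hlampos : (0:ℝ) < lam := by linarith
  have hh0 : 0 < h := by rw [hh_def]; positivity
  have hh1 : h ≤ 1 := by rw [hh_def]; rw [div_le_one hlampos]; linarith
  have hhlam : h ≤ lam := by linarith
  have hTlb : (Real.exp lam * (1 - δ/4) - 1 - lam) / lam ^ 2 ≤ T (lam - h) := by
    rw [T_eq _ (by linarith : (0:ℝ) < lam - h)]
    have hexpmh : Real.exp lam * (1 - δ/4) ≤ Real.exp (lam - h) := by
      have he : Real.exp (lam - h) = Real.exp lam * Real.exp (-h) := by
        rw [← Real.exp_add]; ring_nf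
      have he2 : 1 - h ≤ Real.exp (-h) := by
        have := Real.add_one_le_exp (-h); linarith
      have he3 : (1 - δ/4 : ℝ) ≤ Real.exp (-h) := by linarith
      nlinarith [Real.exp_pos lam]
    have hN : 0 ≤ Real.exp (lam - h) - 1 - (lam - h) := by
      have := Real.add_one_le_exp (lam - h); linarith
    calc (Real.exp lam * (1 - δ/4) - 1 - lam) / lam ^ 2
        ≤ (Real.exp (lam - h) - 1 - (lam - h)) / lam ^ 2 :=
          (div_le_div_iff_of_pos_right (by positivity)).mpr (by linarith)
      _ ≤ (Real.exp (lam - h) - 1 - (lam - h)) / (lam - h) ^ 2 := by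
          exact div_le_div_of_nonneg_left hN (pow_pos (by linarith : (0:ℝ) < lam - h) 2) (by nlinarith)
  have hBlb : K * T (lam - h) - 2 * lam ≤ (K * S lam - K * S (lam - h) - 2) / h := by
    have hstep := S_incr_lower lam h hh0.le hhlam
    have hnum : h * (K * T (lam - h)) - 2 ≤ K * S lam - K * S (lam - h) - 2 := by nlinarith
    calc K * T (lam - h) - 2 * lam = (h * (K * T (lam - h)) - 2) / h := by
          rw [hh_def]; field_simp
      _ ≤ (K * S lam - K * S (lam - h) - 2) / h := (div_le_div_iff_of_pos_right hh0).mpr hnum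
  have h1 : x * L ^ 2 * (1 + δ) * (1 - δ/4) / lam ^ 2 - K * (1 + lam) / lam ^ 2 ≤
      K * T (lam - h) := by
    have hm := mul_le_mul_of_nonneg_left hTlb hK.le
    calc x * L ^ 2 * (1 + δ) * (1 - δ/4) / lam ^ 2 - K * (1 + lam) / lam ^ 2
        = K * ((Real.exp lam * (1 - δ/4) - 1 - lam) / lam ^ 2) := by
          rw [show K * ((Real.exp lam * (1 - δ/4) - 1 - lam) / lam ^ 2) =
            ((K * Real.exp lam) * (1 - δ/4) - K * (1 + lam)) / lam ^ 2 by ring, hexp_lam]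
          ring
      _ ≤ K * T (lam - h) := hm
  have h2 : x * (1 + δ) * (1 - δ/4) / (1 + δ/16) ^ 2 ≤
      x * L ^ 2 * (1 + δ) * (1 - δ/4) / lam ^ 2 := by
    rw [div_le_div_iff₀ (by positivity) (by positivity)]
    have hlamsq : lam ^ 2 ≤ (1 + δ/16) ^ 2 * L ^ 2 := by
      nlinarith [mul_self_le_mul_self hlampos.le hlamle]
    have hcoef : 0 ≤ x * (1 + δ) * (1 - δ/4) := by nlinarith
    nlinarith [mul_le_mul_of_nonneg_left hlamsq hcoef]
  have h3 : K * (1 + lam) / lam ^ 2 ≤ 2 * K := by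
    rw [div_le_iff₀ (pow_pos hlampos 2)]
    have e1 : 1 + lam ≤ 2 * lam ^ 2 := by nlinarith
    nlinarith [mul_le_mul_of_nonneg_left e1 hK.le]
  have h4 : 2 * K + 2 * lam ≤ 3 * δ / 16 * x := by
    have hlam2L : lam ≤ 2 * L := by nlinarith
    linarith
  have h5 : x * (1 + δ/2) ≤ x * (1 + δ) * (1 - δ/4) / (1 + δ/16) ^ 2 := by
    rw [le_div_iff₀ (by positivity)]
    have e1 : δ * δ ≤ δ / 8 := by nlinarith
    have e2 : δ * δ * δ ≤ δ / 64 := by nlinarith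
    have e3 : (1 + δ/2) * (1 + δ/16) ^ 2 ≤ (1 + δ) * (1 - δ/4) := by nlinarith
    nlinarith [mul_le_mul_of_nonneg_left e3 (show (0:ℝ) ≤ x by linarith)]
  nlinarith [hBlb, h1, h2, h3, h4, h5, mul_pos hδ0 (show (0:ℝ) < x by linarith)]



lemma core {Ω : Type*} [MeasureSpace Ω] [IsProbabilityMeasure (ℙ : Measure Ω)]
    (ξ : Ω → ℝ) (hmeas : Measurable ξ)
    (φ : ℝ → ℝ) (hφ : ∀ μ : ℝ, ∫ ω, Real.exp (μ * ξ ω) ∂ℙ = Real.exp (φ μ))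
    (lam h x : ℝ) (hh : 0 < h) (hlam : 0 ≤ lam) (hφ0 : 0 ≤ φ lam)
    (hxB : x < (φ lam - φ (lam - h) - 2) / h) :
    (1/2) * Real.exp (-(lam * ((φ (lam + h) - φ lam + 2) / h))) ≤
      (ℙ {ω | x < ξ ω}).toReal := by
  have hint : ∀ μ : ℝ, Integrable (fun ω => Real.exp (μ * ξ ω)) ℙ := by
    intro μ
    by_contra hcon
    have h0 := integral_undef hcon
    rw [hφ μ] at h0
    exact (Real.exp_pos _).ne' h0
  set A : ℝ := (φ (lam + h) - φ lam + 2) / h with hA_def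
  set B : ℝ := (φ lam - φ (lam - h) - 2) / h with hB_def
  have hhA : h * A = φ (lam + h) - φ lam + 2 := mul_div_cancel₀ _ hh.ne'
  have hhB : h * B = φ lam - φ (lam - h) - 2 := mul_div_cancel₀ _ hh.ne'
  have hmset : MeasurableSet {ω | x < ξ ω} := measurableSet_lt measurable_const hmeas
  set P : ℝ := (ℙ {ω | x < ξ ω}).toReal with hP_def
  have hPnn : 0 ≤ P := ENNReal.toReal_nonneg
  set g1 : Ω → ℝ := fun ω => Real.exp (-(h * A)) * Real.exp ((lam + h) * ξ ω) with hg1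
  set g2 : Ω → ℝ := fun ω => Real.exp (h * B) * Real.exp ((lam - h) * ξ ω) with hg2
  set g3 : Ω → ℝ := fun ω =>
    Set.indicator {ω' | x < ξ ω'} (fun _ => Real.exp (lam * A)) ω with hg3
  have hpt : ∀ ω, Real.exp (lam * ξ ω) ≤ g1 ω + g2 ω + g3 ω := by
    intro ω
    have h1nn : 0 ≤ g1 ω := by positivity
    have h2nn : 0 ≤ g2 ω := by positivity
    have h3nn : 0 ≤ g3 ω := Set.indicator_nonneg (fun _ _ => (Real.exp_pos _).le) ω
    by_cases hA1 : A < ξ ω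
    · have : Real.exp (lam * ξ ω) ≤ g1 ω := by
        rw [hg1]; beta_reduce; rw [← Real.exp_add]
        apply Real.exp_le_exp.mpr
        nlinarith
      linarith
    · by_cases hB1 : ξ ω < B
      · have : Real.exp (lam * ξ ω) ≤ g2 ω := by
          rw [hg2]; beta_reduce; rw [← Real.exp_add]
          apply Real.exp_le_exp.mpr
          nlinarith
        linarith
      · push_neg at hA1 hB1
        have hmem : ω ∈ {ω' | x < ξ ω'} := lt_of_lt_of_le hxB hB1
        have : g3 ω = Real.exp (lam * A) := by
          rw [hg3]; exact Set.indicator_of_mem hmem _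
        have hle : Real.exp (lam * ξ ω) ≤ g3 ω := by
          rw [this]
          exact Real.exp_le_exp.mpr (mul_le_mul_of_nonneg_left hA1 hlam)
        linarith
  have hint1 : Integrable g1 ℙ := (hint (lam + h)).const_mul _
  have hint2 : Integrable g2 ℙ := (hint (lam - h)).const_mul _
  have hint3 : Integrable g3 ℙ := (integrable_const _).indicator hmset
  have hint12 : Integrable (fun ω => g1 ω + g2 ω) ℙ := hint1.add hint2
  have key : Real.exp (φ lam) ≤
      Real.exp (-(h * A)) * Real.exp (φ (lam + h)) +
        Real.exp (h * B) * Real.exp (φ (lam - h)) + Real.exp (lam * A) * P := by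
    rw [← hφ lam]
    calc ∫ ω, Real.exp (lam * ξ ω) ∂ℙ ≤ ∫ ω, (g1 ω + g2 ω + g3 ω) ∂ℙ :=
          integral_mono (hint lam) (hint12.add hint3) hpt
      _ = (∫ ω, g1 ω ∂ℙ) + (∫ ω, g2 ω ∂ℙ) + ∫ ω, g3 ω ∂ℙ := by
          rw [integral_add hint12 hint3, integral_add hint1 hint2]
      _ = Real.exp (-(h * A)) * Real.exp (φ (lam + h)) +
            Real.exp (h * B) * Real.exp (φ (lam - h)) + Real.exp (lam * A) * P := by
          rw [hg1, hg2, hg3]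
          rw [integral_const_mul, integral_const_mul, hφ, hφ, integral_indicator_const _ hmset]
          rw [smul_eq_mul, hP_def, measureReal_def]
          ring
  have he1 : Real.exp (-(h * A)) * Real.exp (φ (lam + h)) = Real.exp (φ lam) * Real.exp (-2) := by
    rw [← Real.exp_add, ← Real.exp_add]; congr 1; rw [hhA]; ring
  have he2 : Real.exp (h * B) * Real.exp (φ (lam - h)) = Real.exp (φ lam) * Real.exp (-2) := by
    rw [← Real.exp_add, ← Real.exp_add]; congr 1; rw [hhB]; ring
  have hquarter : Real.exp (-2 : ℝ) ≤ 1/4 := by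
    rw [Real.exp_neg, show (2:ℝ) = 1 + 1 by norm_num, Real.exp_add]
    rw [inv_le_comm₀ (by positivity) (by norm_num)]
    nlinarith [Real.exp_one_gt_d9]
  have hone : (1:ℝ) ≤ Real.exp (φ lam) := Real.one_le_exp hφ0
  have hmain : (1:ℝ)/2 ≤ Real.exp (lam * A) * P := by
    rw [he1, he2] at key
    nlinarith [Real.exp_pos (φ lam)]
  calc (1/2) * Real.exp (-(lam * A)) ≤ (Real.exp (lam * A) * P) * Real.exp (-(lam * A)) :=
        mul_le_mul_of_nonneg_right hmain (Real.exp_pos _).le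
    _ = P * (Real.exp (lam * A) * Real.exp (-(lam * A))) := by ring
    _ = P := by rw [← Real.exp_add, add_neg_cancel, Real.exp_zero, mul_one]


end Stmt8Aux


set_option maxHeartbeats 1000000 in
theorem stmt_8 (Ω : Type*) [MeasureSpace Ω] [IsProbabilityMeasure (ℙ : Measure Ω)]
    (α : ℝ) (hα : 0 < α) (ξ : Ω → ℝ) (hmeas : Measurable ξ)
    (hnonneg : ∀ ω, 0 ≤ ξ ω)
    (hmgf : ∀ lam : ℝ, ∫ ω, Real.exp (lam * ξ ω) ∂ℙ =
      Real.exp (((α + 1) / α) *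
        ∑' k : ℕ, lam ^ (k + 1) / ((Nat.factorial (k + 2) : ℝ) * (k + 1)))) :
    (∀ c : ℝ, c < 1 →
      Tendsto (fun x : ℝ => Real.exp (c * x * Real.log x) * (ℙ {ω | x < ξ ω}).toReal)
        atTop (nhds 0)) ∧
    (∀ c : ℝ, 1 < c →
      Tendsto (fun x : ℝ => Real.exp (c * x * Real.log x) * (ℙ {ω | x < ξ ω}).toReal)
        atTop atTop) := by
  set K : ℝ := (α + 1) / α with hK_def
  have hK : 0 < K := by positivity
  have hφeq : ∀ μ : ℝ, ∫ ω, Real.exp (μ * ξ ω) ∂ℙ = Real.exp (K * Stmt8Aux.S μ) := by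
    intro μ
    rw [hmgf μ, Stmt8Aux.S_eq]
  have hint : ∀ μ : ℝ, Integrable (fun ω => Real.exp (μ * ξ ω)) ℙ := by
    intro μ
    by_contra hcon
    have h0 := integral_undef hcon
    rw [hφeq μ] at h0
    exact (Real.exp_pos _).ne' h0
  clear_value K
  clear hmgf hK_def
  constructor
  · intro c hc
    have hev : ∀ᶠ x : ℝ in atTop,
        Real.exp (c * x * Real.log x) * (ℙ {ω | x < ξ ω}).toReal ≤
          Real.exp ((c - 1) * x * Real.log x + K * x) := by
      filter_upwards [eventually_ge_atTop (1 : ℝ)] with x hx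
      have hx0 : (0 : ℝ) < x := lt_of_lt_of_le one_pos hx
      have hL : 0 ≤ Real.log x := Real.log_nonneg hx
      set L := Real.log x with hL_def
      set P := (ℙ {ω | x < ξ ω}).toReal with hP_def
      have hPnn : 0 ≤ P := ENNReal.toReal_nonneg
      have hsub : {ω | x < ξ ω} ⊆
          {ω | Real.exp (x * L) ≤ Real.exp (L * ξ ω)} := by
        intro ω hω
        simp only [Set.mem_setOf_eq] at *
        apply Real.exp_le_exp.mpr
        nlinarith
      have hmono : P ≤
          (ℙ {ω | Real.exp (x * L) ≤ Real.exp (L * ξ ω)}).toReal :=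
        ENNReal.toReal_mono (measure_ne_top _ _) (measure_mono hsub)
      have hmarkov := mul_meas_ge_le_integral_of_nonneg
        (f := fun ω => Real.exp (L * ξ ω)) (μ := ℙ)
        (ae_of_all _ fun ω => (Real.exp_pos _).le) (hint L) (Real.exp (x * L))
      have h1 : Real.exp (x * L) * P ≤ Real.exp (K * Stmt8Aux.S L) := by
        calc Real.exp (x * L) * P ≤
            Real.exp (x * L) * (ℙ {ω | Real.exp (x * L) ≤ Real.exp (L * ξ ω)}).toReal :=
              mul_le_mul_of_nonneg_left hmono (Real.exp_pos _).le
          _ ≤ ∫ ω, Real.exp (L * ξ ω) ∂ℙ := hmarkov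
          _ = Real.exp (K * Stmt8Aux.S L) := hφeq L
      have h2 : K * Stmt8Aux.S L ≤ K * x := by
        have hS := Stmt8Aux.S_le_exp L hL
        rw [hL_def, Real.exp_log hx0] at hS
        nlinarith
      have h3 : Real.exp (x * L) * P ≤ Real.exp (K * x) :=
        le_trans h1 (Real.exp_le_exp.mpr h2)
      calc Real.exp (c * x * L) * P = Real.exp ((c - 1) * x * L) * (Real.exp (x * L) * P) := by
            rw [← mul_assoc, ← Real.exp_add]; congr 2; ring
        _ ≤ Real.exp ((c - 1) * x * L) * Real.exp (K * x) :=
            mul_le_mul_of_nonneg_left h3 (Real.exp_pos _).le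
        _ = Real.exp ((c - 1) * x * L + K * x) := (Real.exp_add _ _).symm
    have hg : Tendsto (fun x : ℝ => Real.exp ((c - 1) * x * Real.log x + K * x)) atTop (nhds 0) := by
      apply Real.tendsto_exp_atBot.comp
      have heq : (fun x : ℝ => (c - 1) * x * Real.log x + K * x) =
          fun x => x * ((c - 1) * Real.log x + K) := by funext x; ring
      rw [heq]
      apply Tendsto.atTop_mul_atBot₀ tendsto_id
      apply tendsto_atBot_add_const_right
      exact Tendsto.const_mul_atTop_of_neg (by linarith) Real.tendsto_log_atTop
    exact squeeze_zero' (Eventually.of_forall fun x =>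
      mul_nonneg (Real.exp_pos _).le ENNReal.toReal_nonneg) hev hg
  · intro c hc
    set c' : ℝ := (1 + c) / 2 with hc'_def
    have hc'1 : 1 < c' := by rw [hc'_def]; linarith
    have hc'c : c' < c := by rw [hc'_def]; linarith
    set δ : ℝ := min (c' - 1) 1 / 8 with hδ_def
    have hδ0 : 0 < δ := by
      rw [hδ_def]; have : (0:ℝ) < min (c' - 1) 1 := lt_min (by linarith) one_pos
      linarith
    have hδ1 : δ ≤ 1 / 8 := by
      rw [hδ_def]; have : min (c' - 1) 1 ≤ 1 := min_le_right _ _; linarith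
    have hδc : 8 * δ ≤ c' - 1 := by
      rw [hδ_def]; have : min (c' - 1) 1 ≤ c' - 1 := min_le_left _ _; linarith
    clear_value c' δ
    have hc'4δ : 1 + 4 * δ ≤ c' := by linarith
    have hlog1δ : 0 < Real.log (1 + δ) := Real.log_pos (by linarith)
    set Cδ : ℝ := Real.log (1 + δ) - Real.log K with hCδ_def
    clear_value Cδ
    set lamf : ℝ → ℝ := fun x => Real.log x + 2 * Real.log (Real.log x) + Cδ with hlamf_def
    have t_log : Tendsto Real.log atTop atTop := Real.tendsto_log_atTop
    have t_loglog : Tendsto (fun x : ℝ => Real.log (Real.log x)) atTop atTop :=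
      t_log.comp t_log
    have t_lam : Tendsto lamf atTop atTop := by
      rw [hlamf_def]
      exact tendsto_atTop_add_const_right _ Cδ
        (Tendsto.atTop_add_atTop t_log (Tendsto.const_mul_atTop two_pos t_loglog))
    have hlo : (fun y : ℝ => 2 * Real.log y + Cδ) =o[atTop] (fun y : ℝ => y) := by
      have h1 : (fun y : ℝ => 2 * Real.log y) =o[atTop] (fun y : ℝ => y) :=
        (Real.isLittleO_log_id_atTop.const_mul_left 2)
      have h2 : (fun _ : ℝ => Cδ) =o[atTop] (fun y : ℝ => y) :=
        Asymptotics.isLittleO_const_id_atTop Cδ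
      exact h1.add h2
    have t_ratio : Tendsto (fun y : ℝ => (2 * Real.log y + Cδ) / y) atTop (nhds 0) :=
      hlo.tendsto_div_nhds_zero
    have t_ratio2 : Tendsto (fun x : ℝ => Real.log x / x) atTop (nhds 0) :=
      Real.isLittleO_log_id_atTop.tendsto_div_nhds_zero
    have evy : ∀ᶠ y : ℝ in atTop,
        2 * Real.log y + Cδ ≤ δ / 16 * y ∧ 0 ≤ 2 * Real.log y + Cδ ∧ 3 ≤ y := by
      have e1 : ∀ᶠ y : ℝ in atTop, (2 * Real.log y + Cδ) / y < δ / 16 :=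
        t_ratio.eventually (gt_mem_nhds (by positivity))
      have e2 : ∀ᶠ y : ℝ in atTop, 0 ≤ 2 * Real.log y + Cδ := by
        have : Tendsto (fun y : ℝ => 2 * Real.log y + Cδ) atTop atTop :=
          tendsto_atTop_add_const_right _ Cδ (Tendsto.const_mul_atTop two_pos t_log)
        exact this.eventually_ge_atTop 0
      filter_upwards [e1, e2, eventually_ge_atTop (3:ℝ)] with y h1 h2 h3
      refine ⟨?_, h2, h3⟩
      have hy : (0:ℝ) < y := by linarith
      rw [div_lt_iff₀ hy] at h1
      nlinarith
    have evmain : ∀ᶠ x : ℝ in atTop,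
        (1/2) * Real.exp ((c - c') * (x * Real.log x)) ≤
          Real.exp (c * x * Real.log x) * (ℙ {ω | x < ξ ω}).toReal := by
      have elam := t_lam.eventually_ge_atTop (max (4 / δ) (1 / Real.log (1 + δ)))
      have eL := t_log.eventually evy
      have erat : ∀ᶠ x : ℝ in atTop, Real.log x / x < δ / 64 :=
        t_ratio2.eventually (gt_mem_nhds (by positivity))
      filter_upwards [elam, eL, erat, eventually_ge_atTop (1:ℝ),
        eventually_ge_atTop (16 * K / δ)] with x hlamge hLfacts hrat hx1 hxK
      obtain ⟨hL16, hLpos, hL3⟩ := hLfacts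
      have hx0 : (0:ℝ) < x := by linarith
      set L : ℝ := Real.log x with hL_def
      clear_value L
      set lam : ℝ := lamf x with hlam_def
      clear_value lam
      have hlamL : L ≤ lam := by
        rw [hlam_def, hlamf_def]; simp only [← hL_def]; linarith
      have hlamle : lam ≤ (1 + δ/16) * L := by
        rw [hlam_def, hlamf_def]; simp only [← hL_def]; nlinarith
      have hlam3 : (3:ℝ) ≤ lam := le_trans hL3 hlamL
      have hlampos : (0:ℝ) < lam := by linarith
      have hlam4δ : 4 / δ ≤ lam := le_trans (le_max_left _ _) hlamge
      have hlamlog : 1 / Real.log (1 + δ) ≤ lam := le_trans (le_max_right _ _) hlamge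
      set h : ℝ := 1 / lam with hh_def
      clear_value h
      have hh0 : 0 < h := by rw [hh_def]; positivity
      have hhδ4 : h ≤ δ / 4 := by
        rw [hh_def, div_le_iff₀ hlampos]
        rw [div_le_iff₀ hδ0] at hlam4δ
        nlinarith
      have hhlog : Real.exp h ≤ 1 + δ := by
        rw [← Real.exp_log (by linarith : (0:ℝ) < 1 + δ)]
        apply Real.exp_le_exp.mpr
        rw [hh_def, div_le_iff₀ hlampos]
        rw [div_le_iff₀ hlog1δ] at hlamlog
        nlinarith
      have hexp_lam : K * Real.exp lam = x * L ^ 2 * (1 + δ) := by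
        have hLpos' : (0:ℝ) < L := by linarith
        have h1 : lam = L + Real.log (L ^ 2) + Real.log (1 + δ) + -(Real.log K) := by
          rw [hlam_def, hlamf_def, hCδ_def]
          simp only [← hL_def]
          rw [Real.log_pow]
          push_cast
          ring
        have hexpL : Real.exp L = x := by rw [hL_def]; exact Real.exp_log hx0
        rw [h1, Real.exp_add, Real.exp_add, Real.exp_add, Real.exp_neg,
          Real.exp_log (by positivity : (0:ℝ) < L ^ 2),
          Real.exp_log (by linarith : (0:ℝ) < 1 + δ), Real.exp_log hK, hexpL]
        field_simp
      have h8L : 8 * L ≤ δ / 8 * x := by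
        rw [div_lt_iff₀ hx0] at hrat
        nlinarith
      have h2K : 2 * K ≤ δ / 8 * x := by
        rw [div_le_iff₀ hδ0] at hxK
        nlinarith
      have hlamA := Stmt8Aux.lamA_bound K δ c' x L lam h hK hδ0 hδ1 hx1 hL3 hlamL hlamle
        hh_def hhlog hexp_lam h8L hc'4δ
      have hxB := Stmt8Aux.B_bound K δ x L lam h hK hδ0 hδ1 hx1 hL3 hlamL hlamle
        hh_def hhδ4 hexp_lam h8L h2K
      have hφ0 : 0 ≤ K * Stmt8Aux.S lam :=
        mul_nonneg hK.le (Stmt8Aux.S_nonneg lam hlampos.le)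
      have hcore := Stmt8Aux.core ξ hmeas (fun μ => K * Stmt8Aux.S μ) (fun μ => hφeq μ)
        lam h x hh0 hlampos.le hφ0 hxB
      beta_reduce at hcore
      calc (1/2) * Real.exp ((c - c') * (x * L))
          ≤ (1/2) * Real.exp (c * x * L -
              lam * ((K * Stmt8Aux.S (lam + h) - K * Stmt8Aux.S lam + 2) / h)) := by
            apply mul_le_mul_of_nonneg_left _ (by norm_num)
            apply Real.exp_le_exp.mpr
            linarith
        _ = Real.exp (c * x * L) * ((1/2) * Real.exp
              (-(lam * ((K * Stmt8Aux.S (lam + h) - K * Stmt8Aux.S lam + 2) / h)))) := by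
            rw [show c * x * L -
              lam * ((K * Stmt8Aux.S (lam + h) - K * Stmt8Aux.S lam + 2) / h) =
              c * x * L + -(lam * ((K * Stmt8Aux.S (lam + h) - K * Stmt8Aux.S lam + 2) / h))
              by ring, Real.exp_add]
            ring
        _ ≤ Real.exp (c * x * L) * (ℙ {ω | x < ξ ω}).toReal :=
            mul_le_mul_of_nonneg_left hcore (Real.exp_pos _).le
    have hminor : Tendsto (fun x : ℝ => (1/2) * Real.exp ((c - c') * (x * Real.log x)))
        atTop atTop := by
      apply Tendsto.const_mul_atTop (by norm_num : (0:ℝ) < 1/2)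
      apply Real.tendsto_exp_atTop.comp
      apply Tendsto.const_mul_atTop (by linarith : (0:ℝ) < c - c')
      exact Tendsto.atTop_mul_atTop₀ tendsto_id Real.tendsto_log_atTop
    exact tendsto_atTop_mono' atTop evmain hminor
end

section
/- Let ξ_1, …, ξ_n be i.i.d. nonnegative random variables satisfying: for all c < 1, e^{c x ln x}·P(ξ_1 > x) → 0 as x → ∞, and for all c > 1, e^{c x ln x}·P(ξ_1 > x) → ∞. Then max(ξ_1,…,ξ_n)·ln(ln n)/ln n converges in probability to 1 as n → ∞. -/
open MeasureTheory ProbabilityTheory Filter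

lemma loglog_tendsto : Tendsto (fun n : ℕ => Real.log (Real.log n)) atTop atTop :=
  (Real.tendsto_log_atTop.comp Real.tendsto_log_atTop).comp tendsto_natCast_atTop_atTop

lemma log_div_self_tendsto : Tendsto (fun x : ℝ => Real.log x / x) atTop (nhds 0) :=
  Real.isLittleO_log_id_atTop.tendsto_div_nhds_zero

lemma self_div_log_tendsto : Tendsto (fun x : ℝ => x / Real.log x) atTop atTop := by
  have h : Tendsto (fun x : ℝ => Real.log x / x) atTop (nhdsWithin 0 (Set.Ioi 0)) := by
    rw [tendsto_nhdsWithin_iff]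
    refine ⟨log_div_self_tendsto, ?_⟩
    filter_upwards [eventually_gt_atTop (1:ℝ)] with x hx
    exact div_pos (Real.log_pos hx) (by linarith)
  have := h.inv_tendsto_nhdsGT_zero
  refine this.congr' ?_
  filter_upwards [eventually_gt_atTop (1:ℝ)] with x hx
  simp [Pi.inv_apply, inv_div]

lemma logn_div_loglog_tendsto :
    Tendsto (fun n : ℕ => Real.log n / Real.log (Real.log n)) atTop atTop :=
  self_div_log_tendsto.comp (Real.tendsto_log_atTop.comp tendsto_natCast_atTop_atTop)

lemma ratio_tendsto (k : ℝ) (hk : 0 < k) :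
    Tendsto (fun n : ℕ =>
      (k * Real.log n / Real.log (Real.log n)) *
        Real.log (k * Real.log n / Real.log (Real.log n)) / Real.log n)
      atTop (nhds k) := by
  have hL : Tendsto (fun n : ℕ => Real.log (Real.log n)) atTop atTop := loglog_tendsto
  have h1 : Tendsto (fun n : ℕ => Real.log k / Real.log (Real.log n)) atTop (nhds 0) :=
    tendsto_const_nhds.div_atTop hL
  have h2 : Tendsto (fun n : ℕ =>
      Real.log (Real.log (Real.log n)) / Real.log (Real.log n)) atTop (nhds 0) :=
    log_div_self_tendsto.comp hL
  have h3 : Tendsto (fun n : ℕ =>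
      k * (Real.log k / Real.log (Real.log n) + 1 -
        Real.log (Real.log (Real.log n)) / Real.log (Real.log n))) atTop (nhds (k * (0 + 1 - 0))) :=
    tendsto_const_nhds.mul ((h1.add tendsto_const_nhds).sub h2)
  rw [show k * (0 + 1 - 0) = k by ring] at h3
  refine h3.congr' ?_
  have hLn : ∀ᶠ n : ℕ in atTop, 1 < Real.log n :=
    (Real.tendsto_log_atTop.comp tendsto_natCast_atTop_atTop).eventually_gt_atTop 1
  filter_upwards [hLn] with n hn
  have hℓ : (0:ℝ) < Real.log n := by linarith
  have hLpos : 0 < Real.log (Real.log n) := Real.log_pos hn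
  have hlg : Real.log (k * Real.log n / Real.log (Real.log n)) =
      Real.log k + Real.log (Real.log n) - Real.log (Real.log (Real.log n)) := by
    rw [Real.log_div (by positivity) (ne_of_gt hLpos), Real.log_mul (ne_of_gt hk) (ne_of_gt hℓ)]
  rw [hlg]
  field_simp

theorem stmt_9 (Ω : Type*) [MeasureSpace Ω] [IsProbabilityMeasure (ℙ : Measure Ω)]
    (ξ : ℕ → Ω → ℝ) (hmeas : ∀ i, Measurable (ξ i))
    (hIndep : iIndepFun ξ ℙ)
    (hident : ∀ i, Measure.map (ξ i) ℙ = Measure.map (ξ 0) ℙ)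
    (hnonneg : ∀ i ω, 0 ≤ ξ i ω)
    (htail0 : ∀ c : ℝ, c < 1 →
      Tendsto (fun x : ℝ => Real.exp (c * x * Real.log x) * (ℙ {ω | x < ξ 0 ω}).toReal)
        atTop (nhds 0))
    (htailTop : ∀ c : ℝ, 1 < c →
      Tendsto (fun x : ℝ => Real.exp (c * x * Real.log x) * (ℙ {ω | x < ξ 0 ω}).toReal)
        atTop atTop) :
    ∀ ε : ℝ, 0 < ε →
      Tendsto (fun n : ℕ =>
          (ℙ {ω | ε < |(⨆ i : Fin n, ξ i ω) * Real.log (Real.log n) / Real.log n - 1|}).toReal)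
        atTop (nhds 0) := by
  -- identical distribution consequences
  have hident_gt : ∀ i x, ℙ {ω | x < ξ i ω} = ℙ {ω | x < ξ 0 ω} := by
    intro i x
    have h : ∀ j, ℙ {ω | x < ξ j ω} = (Measure.map (ξ j) ℙ) (Set.Ioi x) := fun j => by
      rw [Measure.map_apply (hmeas j) measurableSet_Ioi]; rfl
    rw [h i, h 0, hident i]
  have hident_le : ∀ i x, ℙ {ω | ξ i ω ≤ x} = ℙ {ω | ξ 0 ω ≤ x} := by
    intro i x
    have h : ∀ j, ℙ {ω | ξ j ω ≤ x} = (Measure.map (ξ j) ℙ) (Set.Iic x) := fun j => by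
      rw [Measure.map_apply (hmeas j) measurableSet_Iic]; rfl
    rw [h i, h 0, hident i]
  -- union bound for the max
  have hsup_gt : ∀ (n : ℕ), 0 < n → ∀ x : ℝ,
      ℙ {ω | x < ⨆ i : Fin n, ξ i ω} ≤ n * ℙ {ω | x < ξ 0 ω} := by
    intro n hn x
    haveI : Nonempty (Fin n) := Fin.pos_iff_nonempty.mp hn
    calc ℙ {ω | x < ⨆ i : Fin n, ξ i ω}
        ≤ ℙ (⋃ i : Fin n, {ω | x < ξ i ω}) := by
          refine measure_mono fun ω hω => ?_
          obtain ⟨i, hi⟩ := exists_lt_of_lt_ciSup (show x < ⨆ i : Fin n, ξ i ω from hω)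
          exact Set.mem_iUnion.mpr ⟨i, hi⟩
      _ ≤ ∑ i : Fin n, ℙ {ω | x < ξ (i : ℕ) ω} := by
          rw [← tsum_fintype (L := SummationFilter.unconditional _)]; exact measure_iUnion_le _
      _ = n * ℙ {ω | x < ξ 0 ω} := by
          simp [hident_gt, Finset.sum_const, Finset.card_univ, nsmul_eq_mul]
  -- independence: the max below a level
  have hsup_le : ∀ (n : ℕ), 0 < n → ∀ x : ℝ,
      ℙ {ω | (⨆ i : Fin n, ξ i ω) ≤ x} = (ℙ {ω | ξ 0 ω ≤ x}) ^ n := by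
    intro n hn x
    haveI : Nonempty (Fin n) := Fin.pos_iff_nonempty.mp hn
    have hset : {ω | (⨆ i : Fin n, ξ i ω) ≤ x} = ⋂ i ∈ Finset.range n, ξ i ⁻¹' Set.Iic x := by
      ext ω
      have hbdd : BddAbove (Set.range fun i : Fin n => ξ i ω) :=
        Set.Finite.bddAbove (Set.finite_range _)
      simp only [Set.mem_setOf_eq, ciSup_le_iff hbdd, Set.mem_iInter, Set.mem_preimage,
        Set.mem_Iic, Finset.mem_range]
      constructor
      · intro h i hi; exact h ⟨i, hi⟩
      · intro h i; exact h i i.2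
    rw [hset, hIndep.measure_inter_preimage_eq_mul (Finset.range n)
      (sets := fun _ => Set.Iic x) (fun i _ => measurableSet_Iic)]
    calc ∏ i ∈ Finset.range n, ℙ (ξ i ⁻¹' Set.Iic x)
        = ∏ _i ∈ Finset.range n, ℙ {ω | ξ 0 ω ≤ x} :=
          Finset.prod_congr rfl fun i _ => hident_le i x
      _ = (ℙ {ω | ξ 0 ω ≤ x}) ^ n := by rw [Finset.prod_const, Finset.card_range]
  -- reduce to ε < 1
  suffices H : ∀ ε : ℝ, 0 < ε → ε < 1 →
      Tendsto (fun n : ℕ =>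
          (ℙ {ω | ε < |(⨆ i : Fin n, ξ i ω) * Real.log (Real.log n) / Real.log n - 1|}).toReal)
        atTop (nhds 0) by
    intro ε hε
    have hδ := H (min ε (1/2)) (lt_min hε (by norm_num)) (min_lt_of_right_lt (by norm_num))
    refine squeeze_zero (fun n => ENNReal.toReal_nonneg) (fun n => ?_) hδ
    refine ENNReal.toReal_mono (measure_ne_top _ _) (measure_mono fun ω hω => ?_)
    simp only [Set.mem_setOf_eq] at hω ⊢
    exact lt_of_le_of_lt (min_le_left _ _) hω
  intro ε hε hε1
  set p : ℝ → ℝ := fun x => (ℙ {ω | x < ξ 0 ω}).toReal with hpdef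
  set a : ℕ → ℝ := fun n => (1 + ε) * Real.log n / Real.log (Real.log n) with hadef
  set b : ℕ → ℝ := fun n => (1 - ε) * Real.log n / Real.log (Real.log n) with hbdef
  have hltop : Tendsto (fun n : ℕ => Real.log n) atTop atTop :=
    Real.tendsto_log_atTop.comp tendsto_natCast_atTop_atTop
  have hεpos1 : (0:ℝ) < 1 + ε := by linarith
  have hεpos2 : (0:ℝ) < 1 - ε := by linarith
  have ha_top : Tendsto a atTop atTop := by
    have := logn_div_loglog_tendsto.const_mul_atTop hεpos1
    refine this.congr fun n => ?_
    simp [hadef, mul_div_assoc]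
  have hb_top : Tendsto b atTop atTop := by
    have := logn_div_loglog_tendsto.const_mul_atTop hεpos2
    refine this.congr fun n => ?_
    simp [hbdef, mul_div_assoc]
  have hra : Tendsto (fun n : ℕ => a n * Real.log (a n) / Real.log n) atTop (nhds (1 + ε)) :=
    ratio_tendsto (1 + ε) hεpos1
  have hrb : Tendsto (fun n : ℕ => b n * Real.log (b n) / Real.log n) atTop (nhds (1 - ε)) :=
    ratio_tendsto (1 - ε) hεpos2
  have hℓ_ev : ∀ᶠ n : ℕ in atTop, 1 < Real.log n := hltop.eventually_gt_atTop 1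
  -- upper estimate: n * p (a n) → 0
  have hU : Tendsto (fun n : ℕ => (n : ℝ) * p (a n)) atTop (nhds 0) := by
    set c₁ : ℝ := (1 + ε / 2) / (1 + ε) with hc1def
    have hc₁ : c₁ < 1 := (div_lt_one hεpos1).2 (by linarith)
    have hcr : Tendsto (fun n : ℕ => c₁ * (a n * Real.log (a n) / Real.log n)) atTop
        (nhds (c₁ * (1 + ε))) := tendsto_const_nhds.mul hra
    have hc1e : c₁ * (1 + ε) = 1 + ε / 2 := div_mul_cancel₀ _ (ne_of_gt hεpos1)
    rw [hc1e] at hcr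
    have hev : ∀ᶠ n : ℕ in atTop, 1 ≤ c₁ * (a n * Real.log (a n) / Real.log n) :=
      hcr.eventually_const_le (by linarith)
    refine squeeze_zero' (Eventually.of_forall fun n => by positivity)
      ?_ ((htail0 c₁ hc₁).comp ha_top)
    filter_upwards [hev, hℓ_ev, eventually_gt_atTop 0] with n h1 h2 h3
    have hℓpos : (0:ℝ) < Real.log n := by linarith
    have hnlog : Real.log n ≤ c₁ * a n * Real.log (a n) := by
      have := mul_le_mul_of_nonneg_right h1 hℓpos.le
      rw [one_mul, mul_comm (c₁ * (a n * Real.log (a n) / Real.log n)) (Real.log n)] at this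
      calc Real.log n ≤ Real.log n * (c₁ * (a n * Real.log (a n) / Real.log n)) := this
        _ = c₁ * a n * Real.log (a n) := by field_simp
    have hncast : (n : ℝ) = Real.exp (Real.log n) := by
      rw [Real.exp_log (by exact_mod_cast h3)]
    show (n : ℝ) * p (a n) ≤ ((fun x => Real.exp (c₁ * x * Real.log x) * p x) ∘ a) n
    simp only [Function.comp_apply]
    rw [hncast]
    exact mul_le_mul_of_nonneg_right (Real.exp_le_exp.2 hnlog) ENNReal.toReal_nonneg
  -- lower estimate: n * p (b n) → ∞
  have hLow : Tendsto (fun n : ℕ => (n : ℝ) * p (b n)) atTop atTop := by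
    set c₂ : ℝ := (1 - ε / 2) / (1 - ε) with hc2def
    have hc₂ : 1 < c₂ := (one_lt_div hεpos2).2 (by linarith)
    have hcr : Tendsto (fun n : ℕ => c₂ * (b n * Real.log (b n) / Real.log n)) atTop
        (nhds (c₂ * (1 - ε))) := tendsto_const_nhds.mul hrb
    have hc2e : c₂ * (1 - ε) = 1 - ε / 2 := div_mul_cancel₀ _ (ne_of_gt hεpos2)
    rw [hc2e] at hcr
    have hev : ∀ᶠ n : ℕ in atTop, c₂ * (b n * Real.log (b n) / Real.log n) ≤ 1 - ε / 4 :=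
      hcr.eventually_le_const (by linarith)
    have hfirst : Tendsto (fun n : ℕ => Real.log n - c₂ * b n * Real.log (b n)) atTop atTop := by
      refine tendsto_atTop_mono' atTop ?_ (hltop.atTop_mul_const (show (0:ℝ) < ε/4 by linarith))
      filter_upwards [hev, hℓ_ev] with n h1 h2
      have hℓpos : (0:ℝ) < Real.log n := by linarith
      have := mul_le_mul_of_nonneg_right h1 hℓpos.le
      have heq : c₂ * (b n * Real.log (b n) / Real.log n) * Real.log n
          = c₂ * b n * Real.log (b n) := by field_simp
      rw [heq] at this
      nlinarith
    have hexp : Tendsto (fun n : ℕ => Real.exp (Real.log n - c₂ * b n * Real.log (b n)))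
        atTop atTop := Real.tendsto_exp_atTop.comp hfirst
    have hprod := hexp.atTop_mul_atTop₀ ((htailTop c₂ hc₂).comp hb_top)
    refine hprod.congr' ?_
    filter_upwards [eventually_gt_atTop 0] with n hn
    have hncast : (n : ℝ) = Real.exp (Real.log n) := by
      rw [Real.exp_log (by exact_mod_cast hn)]
    simp only [Function.comp_apply, hpdef]
    rw [← mul_assoc, ← Real.exp_add, show Real.log n - c₂ * b n * Real.log (b n)
        + c₂ * b n * Real.log (b n) = Real.log n by ring, ← hncast]
  -- final squeeze
  have hq_bound : ∀ (n : ℕ), 0 < n →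
      (ℙ {ω | (⨆ i : Fin n, ξ i ω) ≤ b n}).toReal ≤ Real.exp (-((n:ℝ) * p (b n))) := by
    intro n hn
    rw [hsup_le n hn (b n), ENNReal.toReal_pow]
    have hq1 : (ℙ {ω | ξ 0 ω ≤ b n}).toReal = 1 - p (b n) := by
      have hcompl : {ω | ξ 0 ω ≤ b n}ᶜ = {ω | b n < ξ 0 ω} := by
        ext ω; simp [not_le]
      have hms : MeasurableSet {ω | ξ 0 ω ≤ b n} := hmeas 0 measurableSet_Iic
      have h2 : ℙ {ω | ξ 0 ω ≤ b n} + ℙ {ω | b n < ξ 0 ω} = 1 := by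
        rw [← hcompl]
        exact prob_add_prob_compl hms
      have h3 := congrArg ENNReal.toReal h2
      rw [ENNReal.toReal_add (measure_ne_top _ _) (measure_ne_top _ _), ENNReal.toReal_one] at h3
      simp only [hpdef]; linarith
    rw [hq1]
    have hple : 1 - p (b n) ≤ Real.exp (-(p (b n))) := by
      have := Real.add_one_le_exp (-(p (b n)))
      linarith
    have hnonneg' : 0 ≤ 1 - p (b n) := by rw [← hq1]; exact ENNReal.toReal_nonneg
    calc (1 - p (b n)) ^ n ≤ (Real.exp (-(p (b n)))) ^ n := pow_le_pow_left₀ hnonneg' hple n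
      _ = Real.exp (-((n:ℝ) * p (b n))) := by
          rw [← Real.exp_nat_mul]; ring_nf
  refine squeeze_zero' (g := fun n : ℕ => (n:ℝ) * p (a n) + Real.exp (-((n:ℝ) * p (b n))))
    (Eventually.of_forall fun n => ENNReal.toReal_nonneg) ?_ ?_
  · -- eventually bound by (n * p (a n)) + exp (-(n * p (b n)))
    filter_upwards [hℓ_ev, eventually_gt_atTop 0] with n hℓn hn
    have hℓpos : (0:ℝ) < Real.log n := by linarith
    have hLpos : (0:ℝ) < Real.log (Real.log n) := Real.log_pos hℓn
    have hincl : {ω | ε < |(⨆ i : Fin n, ξ i ω) * Real.log (Real.log n) / Real.log n - 1|}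
        ⊆ {ω | a n < ⨆ i : Fin n, ξ i ω} ∪ {ω | (⨆ i : Fin n, ξ i ω) ≤ b n} := by
      intro ω hω
      simp only [Set.mem_setOf_eq] at hω
      set M := ⨆ i : Fin n, ξ i ω with hM
      rcases lt_abs.mp hω with h | h
      · left
        have h1 : 1 + ε < M * Real.log (Real.log n) / Real.log n := by linarith
        have h2 : (1 + ε) * Real.log n < M * Real.log (Real.log n) :=
          (lt_div_iff₀ hℓpos).mp h1
        exact (div_lt_iff₀ hLpos).mpr h2
      · right
        have h1 : M * Real.log (Real.log n) / Real.log n < 1 - ε := by linarith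
        have h2 : M * Real.log (Real.log n) < (1 - ε) * Real.log n :=
          (div_lt_iff₀ hℓpos).mp h1
        exact le_of_lt ((lt_div_iff₀ hLpos).mpr h2)
    have hub : ℙ {ω | ε < |(⨆ i : Fin n, ξ i ω) * Real.log (Real.log n) / Real.log n - 1|}
        ≤ ℙ {ω | a n < ⨆ i : Fin n, ξ i ω} + ℙ {ω | (⨆ i : Fin n, ξ i ω) ≤ b n} :=
      (measure_mono hincl).trans (measure_union_le _ _)
    have hA : (ℙ {ω | a n < ⨆ i : Fin n, ξ i ω}).toReal ≤ (n:ℝ) * p (a n) := by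
      have := hsup_gt n hn (a n)
      have h2 := ENNReal.toReal_mono (by
        exact ENNReal.mul_ne_top (ENNReal.natCast_ne_top n) (measure_ne_top _ _)) this
      rwa [ENNReal.toReal_mul, ENNReal.toReal_natCast] at h2
    have hB := hq_bound n hn
    calc (ℙ {ω | ε < |(⨆ i : Fin n, ξ i ω) * Real.log (Real.log n) / Real.log n - 1|}).toReal
        ≤ (ℙ {ω | a n < ⨆ i : Fin n, ξ i ω} + ℙ {ω | (⨆ i : Fin n, ξ i ω) ≤ b n}).toReal :=
          ENNReal.toReal_mono (by
            exact ENNReal.add_ne_top.mpr ⟨measure_ne_top _ _, measure_ne_top _ _⟩) hub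
      _ = (ℙ {ω | a n < ⨆ i : Fin n, ξ i ω}).toReal
          + (ℙ {ω | (⨆ i : Fin n, ξ i ω) ≤ b n}).toReal :=
          ENNReal.toReal_add (measure_ne_top _ _) (measure_ne_top _ _)
      _ ≤ (n:ℝ) * p (a n) + Real.exp (-((n:ℝ) * p (b n))) := add_le_add hA hB
  · have h2 : Tendsto (fun n : ℕ => Real.exp (-((n:ℝ) * p (b n)))) atTop (nhds 0) :=
      Real.tendsto_exp_atBot.comp (tendsto_neg_atBot_iff.mpr hLow)
    have := hU.add h2
    simpa using this
end

section
/- Let h(u) = 1 + (e^u − 1)/u for u ≠ 0 and h(0) = 2. Then the function u ↦ h'(u)/h(u) (with value 1/4 at 0) is a strictly increasing bijection from ℝ onto (0,1). -/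
open Real

section Aux
open Filter Set Topology

private lemma exp_ge4' (u : ℝ) (hu : 0 ≤ u) : 1 + u + u^2/2 + u^3/6 + u^4/24 ≤ Real.exp u := by
  have := Real.sum_le_exp_of_nonneg hu 5
  simp [Finset.sum_range_succ, Nat.factorial] at this
  norm_num at this ⊢; linarith

private lemma exp_ge5' (u : ℝ) (hu : 0 ≤ u) :
    1 + u + u^2/2 + u^3/6 + u^4/24 + u^5/120 ≤ Real.exp u := by
  have := Real.sum_le_exp_of_nonneg hu 6
  simp [Finset.sum_range_succ, Nat.factorial] at this
  norm_num at this ⊢; linarith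

private lemma Qpos' (u : ℝ) (hu : u ≠ 0) :
    0 < Real.exp u * (u^3 - 3*u^2 + 2*u) + (Real.exp u - 1)^2 - 2*u := by
  rcases hu.lt_or_gt with hneg | hpos
  · obtain ⟨v, hv0, rfl⟩ : ∃ v, 0 < v ∧ u = -v := ⟨-u, by linarith, by ring⟩
    rw [Real.exp_neg]
    set t := Real.exp v with ht
    have htpos : 0 < t := Real.exp_pos v
    set s : ℝ := 1 + v + v^2/2 + v^3/6 + v^4/24 + v^5/120 with hs
    have hts : s ≤ t := exp_ge5' v hv0.le
    have hspos : 0 < s := by positivity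
    have hs1 : 1 ≤ s := by
      rw [hs]; nlinarith [pow_pos hv0 2, pow_pos hv0 3, pow_pos hv0 4, pow_pos hv0 5]
    have ht1 : 1 ≤ t := le_trans hs1 hts
    have hW : 0 < (1-t)^2 + 2*v*t^2 - (v^3+3*v^2+2*v)*t := by
      have key : (1-t)^2 + 2*v*t^2 - (v^3+3*v^2+2*v)*t
          = ((1-s)^2 + 2*v*s^2 - (v^3+3*v^2+2*v)*s)
            + (t - s)*((1+2*v)*(t+s) - (2 + v^3+3*v^2+2*v)) := by ring
      have h1 : 0 < (1-s)^2 + 2*v*s^2 - (v^3+3*v^2+2*v)*s := by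
        have hfac : (1-s)^2 + 2*v*s^2 - (v^3+3*v^2+2*v)*s
            = v^4*(5/12 + v/2 + 14*v^2/45 + 23*v^3/180 + 13*v^4/320 + 7*v^5/720
              + 7*v^6/4800 + v^7/7200) := by rw [hs]; ring
        rw [hfac]; positivity
      have h2 : 0 ≤ (t - s)*((1+2*v)*(t+s) - (2 + v^3+3*v^2+2*v)) := by
        apply mul_nonneg (by linarith)
        have h2s : 2*s ≤ t + s := by linarith
        have h3 : 0 ≤ (1+2*v)*(2*s) - (2 + v^3+3*v^2+2*v) := by
          rw [hs]
          nlinarith [sq_nonneg v, sq_nonneg (v-1), hv0.le, pow_pos hv0 3, pow_pos hv0 4,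
            pow_pos hv0 5]
        nlinarith [mul_le_mul_of_nonneg_left h2s (by linarith : (0:ℝ) ≤ 1 + 2*v)]
      linarith
    have hgoal : t⁻¹ * ((-v)^3 - 3*(-v)^2 + 2*(-v)) + (t⁻¹ - 1)^2 - 2*(-v)
        = ((1-t)^2 + 2*v*t^2 - (v^3+3*v^2+2*v)*t) / t^2 := by
      field_simp; ring
    rw [hgoal]
    exact div_pos hW (by positivity)
  · set t := Real.exp u with ht
    have htpos : 0 < t := Real.exp_pos u
    set s : ℝ := 1 + u + u^2/2 + u^3/6 + u^4/24 with hs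
    have hts : s ≤ t := exp_ge4' u hpos.le
    have hspos : 0 < s := by positivity
    have key : t * (u^3 - 3*u^2 + 2*u) + (t - 1)^2 - 2*u
        = (s * (u^3 - 3*u^2 + 2*u) + (s - 1)^2 - 2*u)
          + (t - s)*(t + s + (u^3 - 3*u^2 + 2*u - 2)) := by ring
    have h1 : 0 < s * (u^3 - 3*u^2 + 2*u) + (s - 1)^2 - 2*u := by
      have hfac : s * (u^3 - 3*u^2 + 2*u) + (s - 1)^2 - 2*u
          = u^4*(5/12 + u/3 + u^2/9 + u^3/18 + u^4/576) := by rw [hs]; ring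
      rw [hfac]; positivity
    have h2 : 0 ≤ (t - s)*(t + s + (u^3 - 3*u^2 + 2*u - 2)) := by
      apply mul_nonneg (by linarith)
      have h3 : 0 ≤ 2*s + (u^3 - 3*u^2 + 2*u - 2) := by
        rw [hs]; nlinarith [sq_nonneg (u - 3/4), pow_pos hpos 3, pow_pos hpos 4]
      linarith
    linarith

private lemma den_pos' (u : ℝ) (hu : u ≠ 0) : 0 < u * (u + Real.exp u - 1) := by
  rcases hu.lt_or_gt with hneg | hpos
  · have h1 : Real.exp u < 1 := by
      rw [← Real.exp_zero]; exact Real.exp_lt_exp.2 hneg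
    nlinarith
  · have h1 : u + 1 < Real.exp u := Real.add_one_lt_exp hu
    nlinarith

private lemma num_pos' (u : ℝ) (hu : u ≠ 0) : 0 < u * Real.exp u - Real.exp u + 1 := by
  rcases le_or_gt 1 u with h1 | h1
  · nlinarith [Real.exp_pos u]
  · have h2 : -u + 1 < Real.exp (-u) := Real.add_one_lt_exp (neg_ne_zero.2 hu)
    rw [Real.exp_neg] at h2
    have h3 := Real.exp_pos u
    have h4 : (1 - u) * Real.exp u < 1 := by
      rw [inv_eq_one_div] at h2
      calc (1-u) * Real.exp u < (1/Real.exp u) * Real.exp u := by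
            apply mul_lt_mul_of_pos_right _ h3; linarith
        _ = 1 := by field_simp
    nlinarith

private lemma num_lt_den' (u : ℝ) (hu : u ≠ 0) :
    u * Real.exp u - Real.exp u + 1 < u * (u + Real.exp u - 1) := by
  have h1 : u + 1 < Real.exp u := Real.add_one_lt_exp hu
  nlinarith [sq_nonneg u, pow_pos (abs_pos.2 hu) 2]

private lemma expSlope' : Tendsto (fun u : ℝ => (Real.exp u - 1)/u) (𝓝[≠] (0:ℝ)) (𝓝 1) := by
  have := hasDerivAt_iff_tendsto_slope.1 (Real.hasDerivAt_exp 0)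
  rw [Real.exp_zero] at this
  refine this.congr' ?_
  filter_upwards [self_mem_nhdsWithin] with x hx
  simp [slope, Real.exp_zero]
  rw [inv_mul_eq_div]

private lemma slopeLim' :
    Tendsto (fun u : ℝ => (Real.exp u - 1 - u)/u^2) (𝓝[≠] (0:ℝ)) (𝓝 (1/2)) := by
  apply HasDerivAt.lhopital_zero_nhdsNE (f' := fun u : ℝ => Real.exp u - 1)
    (g' := fun u : ℝ => 2*u)
  · filter_upwards with x
    exact ((Real.hasDerivAt_exp x).sub_const 1).sub (hasDerivAt_id x)
  · filter_upwards with x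
    simpa using hasDerivAt_pow 2 x
  · filter_upwards [self_mem_nhdsWithin] with x hx
    exact mul_ne_zero two_ne_zero hx
  · have : Tendsto (fun u : ℝ => Real.exp u - 1 - u) (𝓝 0) (𝓝 0) := by
      have h := Continuous.tendsto (f := fun u : ℝ => Real.exp u - 1 - u) (by continuity) 0
      simpa using h
    exact this.mono_left nhdsWithin_le_nhds
  · have : Tendsto (fun u : ℝ => u^2) (𝓝 (0:ℝ)) (𝓝 0) := by
      have := (continuous_pow 2).tendsto (0:ℝ)
      simpa using this
    exact this.mono_left nhdsWithin_le_nhds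
  · have h2 : Tendsto (fun u : ℝ => (1/2) * ((Real.exp u - 1)/u)) (𝓝[≠] (0:ℝ))
        (𝓝 ((1/2) * 1)) := expSlope'.const_mul _
    rw [mul_one] at h2
    refine h2.congr' ?_
    filter_upwards [self_mem_nhdsWithin] with x hx
    field_simp

private lemma negMap' : Tendsto (fun u : ℝ => -u) (𝓝[≠] (0:ℝ)) (𝓝[≠] (0:ℝ)) := by
  apply tendsto_nhdsWithin_of_tendsto_nhds_of_eventually_within
  · have := (continuous_neg (G := ℝ)).tendsto 0
    simpa using this.mono_left nhdsWithin_le_nhds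
  · filter_upwards [self_mem_nhdsWithin] with x hx
    simpa using hx

private lemma T1' : Tendsto (fun u : ℝ => (u * Real.exp u - Real.exp u + 1)/u^2)
    (𝓝[≠] (0:ℝ)) (𝓝 (1/2)) := by
  have hexp : Tendsto (fun u : ℝ => Real.exp u) (𝓝[≠] (0:ℝ)) (𝓝 1) := by
    have := Real.continuous_exp.tendsto 0
    rw [Real.exp_zero] at this
    exact this.mono_left nhdsWithin_le_nhds
  have hcomp : Tendsto (fun u : ℝ => (Real.exp (-u) - 1 - (-u))/(-u)^2) (𝓝[≠] (0:ℝ))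
      (𝓝 (1/2)) := slopeLim'.comp negMap'
  have hmul := hexp.mul hcomp
  rw [one_mul] at hmul
  refine hmul.congr' ?_
  filter_upwards [self_mem_nhdsWithin] with x hx
  have hx' : (x:ℝ) ≠ 0 := hx
  have he := Real.exp_neg x
  rw [he]
  have h3 := Real.exp_pos x
  field_simp
  ring

private lemma T2' : Tendsto (fun u : ℝ => (u + Real.exp u - 1)/u) (𝓝[≠] (0:ℝ)) (𝓝 2) := by
  have h1 : Tendsto (fun u : ℝ => 1 + (Real.exp u - 1)/u) (𝓝[≠] (0:ℝ)) (𝓝 (1+1)) :=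
    (tendsto_const_nhds).add expSlope'
  norm_num at h1
  refine h1.congr' ?_
  filter_upwards [self_mem_nhdsWithin] with x hx
  have hx' : (x:ℝ) ≠ 0 := hx
  field_simp
  ring

private lemma gtopAux' :
    Tendsto (fun u : ℝ => (u * Real.exp u - Real.exp u + 1)/(u * (u + Real.exp u - 1)))
    atTop (𝓝 1) := by
  have hinv : Tendsto (fun u : ℝ => 1/u) atTop (𝓝 (0:ℝ)) := by
    simpa using tendsto_inv_atTop_zero (𝕜 := ℝ)
  have hexp : Tendsto (fun u : ℝ => Real.exp (-u)) atTop (𝓝 0) :=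
    Real.tendsto_exp_neg_atTop_nhds_zero
  have hue : Tendsto (fun u : ℝ => u * Real.exp (-u)) atTop (𝓝 0) := by
    have := Real.tendsto_pow_mul_exp_neg_atTop_nhds_zero 1
    simpa using this
  have hnum : Tendsto (fun u : ℝ => 1 - 1/u + Real.exp (-u) * (1/u)) atTop (𝓝 1) := by
    have := ((tendsto_const_nhds (x := (1:ℝ))).sub hinv).add (hexp.mul hinv)
    simpa using this
  have hden : Tendsto (fun u : ℝ => u * Real.exp (-u) + 1 - Real.exp (-u)) atTop (𝓝 1) := by
    have := (hue.add_const 1).sub hexp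
    simpa using this
  have hdiv := hnum.div hden one_ne_zero
  rw [div_one] at hdiv
  refine hdiv.congr' ?_
  filter_upwards [eventually_gt_atTop (0:ℝ)] with u hu
  have hu' : u ≠ 0 := ne_of_gt hu
  have he : Real.exp (-u) = (Real.exp u)⁻¹ := Real.exp_neg u
  have hep := Real.exp_pos u
  simp only [Pi.div_apply]
  have hgt : u + 1 < Real.exp u := Real.add_one_lt_exp hu'
  have hden2 : 0 < u + Real.exp u - 1 := by linarith
  have hDpos : 0 < u * (u + Real.exp u - 1) := mul_pos hu hden2
  have hd1pos : 0 < u * Real.exp (-u) + 1 - Real.exp (-u) := by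
    have : u * Real.exp (-u) + 1 - Real.exp (-u) = Real.exp (-u) * (u + Real.exp u - 1) := by
      rw [he]; field_simp
    rw [this]
    positivity
  rw [div_eq_div_iff hd1pos.ne' hDpos.ne', he]
  field_simp

private lemma gbotAux' :
    Tendsto (fun u : ℝ => (u * Real.exp u - Real.exp u + 1)/(u * (u + Real.exp u - 1)))
    atBot (𝓝 0) := by
  have h1 : Tendsto (fun u : ℝ => u * Real.exp u) atBot (𝓝 0) := by
    have h2 : Tendsto (fun x : ℝ => -(x * Real.exp (-x))) atTop (𝓝 0) := by
      have := Real.tendsto_pow_mul_exp_neg_atTop_nhds_zero 1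
      simp only [pow_one] at this
      simpa using this.neg
    have h3 := h2.comp tendsto_neg_atBot_atTop
    refine h3.congr fun x => ?_
    simp
  have hN : Tendsto (fun u : ℝ => u * Real.exp u - Real.exp u + 1) atBot (𝓝 1) := by
    have h4 := Real.tendsto_exp_atBot
    have := (h1.sub h4).add_const 1
    simpa using this
  have hD : Tendsto (fun u : ℝ => u * (u + Real.exp u - 1)) atBot atTop := by
    have h5 : Tendsto (fun u : ℝ => u^2 - u) atBot atTop := by
      apply tendsto_atTop_mono' _ _ tendsto_neg_atBot_atTop
      filter_upwards [eventually_le_atBot (0:ℝ)] with x hx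
      nlinarith
    have h6 := h1.add_atTop h5
    refine h6.congr' ?_
    filter_upwards with x
    ring
  exact hN.div_atTop hD


private lemma hasDerivAt_h_ne' (h : ℝ → ℝ)
    (hdef : ∀ u : ℝ, u ≠ 0 → h u = 1 + (Real.exp u - 1) / u) (u : ℝ) (hu : u ≠ 0) :
    HasDerivAt h ((u * Real.exp u - Real.exp u + 1) / u^2) u := by
  have hev : h =ᶠ[𝓝 u] (fun x => 1 + (Real.exp x - 1)/x) := by
    filter_upwards [isOpen_ne.mem_nhds hu] with x hx
    exact hdef x hx
  have h1 : HasDerivAt (fun x : ℝ => Real.exp x - 1) (Real.exp u) u :=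
    (Real.hasDerivAt_exp u).sub_const 1
  have h2 : HasDerivAt (fun x : ℝ => x) 1 u := hasDerivAt_id u
  have H := (h1.div h2 hu).const_add 1
  have heq : (Real.exp u * u - (Real.exp u - 1) * 1) / u ^ 2
      = (u * Real.exp u - Real.exp u + 1) / u^2 := by ring
  rw [heq] at H
  exact H.congr_of_eventuallyEq hev

private lemma hasDerivAt_h_zero' (h : ℝ → ℝ)
    (hdef : ∀ u : ℝ, u ≠ 0 → h u = 1 + (Real.exp u - 1) / u) (h0 : h 0 = 2) :
    HasDerivAt h (1/2) 0 := by
  rw [hasDerivAt_iff_tendsto_slope]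
  refine slopeLim'.congr' ?_
  filter_upwards [self_mem_nhdsWithin] with x hx
  have hx' : (x : ℝ) ≠ 0 := hx
  rw [slope_def_field, hdef x hx', h0]
  field_simp
  ring

private lemma g_eq' (h : ℝ → ℝ)
    (hdef : ∀ u : ℝ, u ≠ 0 → h u = 1 + (Real.exp u - 1) / u) (u : ℝ) (hu : u ≠ 0) :
    deriv h u / h u = (u * Real.exp u - Real.exp u + 1)/(u * (u + Real.exp u - 1)) := by
  rw [(hasDerivAt_h_ne' h hdef u hu).deriv, hdef u hu]
  have hd := den_pos' u hu
  have h2 : u + Real.exp u - 1 ≠ 0 := (mul_ne_zero_iff.1 hd.ne').2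
  have h3 : 1 + (Real.exp u - 1)/u = (u + Real.exp u - 1)/u := by field_simp; ring
  rw [h3, div_eq_div_iff (div_ne_zero h2 hu) hd.ne']
  field_simp

private lemma g_hasDeriv' (h : ℝ → ℝ)
    (hdef : ∀ u : ℝ, u ≠ 0 → h u = 1 + (Real.exp u - 1) / u) (u : ℝ) (hu : u ≠ 0) :
    HasDerivAt (fun x => deriv h x / h x)
      ((Real.exp u * (u^3 - 3*u^2 + 2*u) + (Real.exp u - 1)^2 - 2*u)
        / (u * (u + Real.exp u - 1))^2) u := by
  have hN : HasDerivAt (fun x : ℝ => x * Real.exp x - Real.exp x + 1) (u * Real.exp u) u := by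
    have H := (((hasDerivAt_id u).mul (Real.hasDerivAt_exp u)).sub
      (Real.hasDerivAt_exp u)).add_const 1
    refine H.congr_deriv ?_
    simp only [id_eq]
    ring
  have hD : HasDerivAt (fun x : ℝ => x * (x + Real.exp x - 1))
      (1 * (u + Real.exp u - 1) + u * (1 + Real.exp u)) u :=
    (hasDerivAt_id u).mul (((hasDerivAt_id u).add (Real.hasDerivAt_exp u)).sub_const 1)
  have hDne : u * (u + Real.exp u - 1) ≠ 0 := (den_pos' u hu).ne'
  have H := hN.div hD hDne
  have heq : (u * Real.exp u * (u * (u + Real.exp u - 1)) -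
        (u * Real.exp u - Real.exp u + 1) * (1 * (u + Real.exp u - 1) + u * (1 + Real.exp u)))
        / (u * (u + Real.exp u - 1)) ^ 2
      = (Real.exp u * (u^3 - 3*u^2 + 2*u) + (Real.exp u - 1)^2 - 2*u)
        / (u * (u + Real.exp u - 1))^2 := by ring
  rw [heq] at H
  refine H.congr_of_eventuallyEq ?_
  filter_upwards [isOpen_ne.mem_nhds hu] with x hx
  exact g_eq' h hdef x hx

end Aux

theorem stmt_13 (h : ℝ → ℝ)
    (hdef : ∀ u : ℝ, u ≠ 0 → h u = 1 + (Real.exp u - 1) / u) (h0 : h 0 = 2) :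
    (fun u : ℝ => deriv h u / h u) 0 = 1 / 4 ∧
    StrictMono (fun u : ℝ => deriv h u / h u) ∧
    Set.BijOn (fun u : ℝ => deriv h u / h u) Set.univ (Set.Ioo 0 1) := by
  have hg0 : deriv h 0 / h 0 = 1/4 := by
    rw [(hasDerivAt_h_zero' h hdef h0).deriv, h0]; norm_num
  have hcont : Continuous (fun u : ℝ => deriv h u / h u) := by
    rw [continuous_iff_continuousAt]
    intro u
    rcases eq_or_ne u 0 with rfl | hu
    · rw [ContinuousAt]
      simp only [hg0]
      rw [← nhdsNE_sup_pure (0:ℝ), Filter.tendsto_sup]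
      constructor
      · have hq := T1'.div T2' (by norm_num : (2:ℝ) ≠ 0)
        norm_num at hq
        refine hq.congr' ?_
        filter_upwards [self_mem_nhdsWithin] with x hx
        have hx' : (x:ℝ) ≠ 0 := hx
        rw [g_eq' h hdef x hx']
        have hdx := den_pos' x hx'
        have h2x : x + Real.exp x - 1 ≠ 0 := (mul_ne_zero_iff.1 hdx.ne').2
        simp only [Pi.div_apply]
        rw [div_eq_div_iff (by positivity) hdx.ne']
        field_simp
      · have := tendsto_pure_nhds (fun u : ℝ => deriv h u / h u) 0
        rw [hg0] at this
        exact this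
    · exact (g_hasDeriv' h hdef u hu).continuousAt
  have hderivpos : ∀ x : ℝ, x ≠ 0 → 0 < deriv (fun u : ℝ => deriv h u / h u) x := by
    intro x hx
    rw [(g_hasDeriv' h hdef x hx).deriv]
    exact div_pos (Qpos' x hx) (pow_pos (den_pos' x hx) 2)
  have hmonoIci : StrictMonoOn (fun u : ℝ => deriv h u / h u) (Set.Ici 0) := by
    apply strictMonoOn_of_deriv_pos (convex_Ici 0) hcont.continuousOn
    intro x hx
    rw [interior_Ici] at hx
    exact hderivpos x (ne_of_gt hx)
  have hmonoIic : StrictMonoOn (fun u : ℝ => deriv h u / h u) (Set.Iic 0) := by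
    apply strictMonoOn_of_deriv_pos (convex_Iic 0) hcont.continuousOn
    intro x hx
    rw [interior_Iic] at hx
    exact hderivpos x (ne_of_lt hx)
  have hmono : StrictMono (fun u : ℝ => deriv h u / h u) := by
    intro x y hxy
    rcases lt_or_ge x 0 with hx0 | hx0
    · rcases le_or_gt y 0 with hy0 | hy0
      · exact hmonoIic (Set.mem_Iic.2 hx0.le) (Set.mem_Iic.2 hy0) hxy
      · calc deriv h x / h x < deriv h 0 / h 0 := hmonoIic (Set.mem_Iic.2 hx0.le) (Set.mem_Iic.2 le_rfl) hx0
          _ < deriv h y / h y := hmonoIci (Set.mem_Ici.2 le_rfl) (Set.mem_Ici.2 hy0.le) hy0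
    · exact hmonoIci (Set.mem_Ici.2 hx0) (Set.mem_Ici.2 (le_trans hx0 hxy.le)) hxy
  have hmem : ∀ u : ℝ, (deriv h u / h u) ∈ Set.Ioo (0:ℝ) 1 := by
    intro u
    rcases eq_or_ne u 0 with rfl | hu
    · rw [hg0]; constructor <;> norm_num
    · rw [g_eq' h hdef u hu]
      exact ⟨div_pos (num_pos' u hu) (den_pos' u hu),
        (div_lt_one (den_pos' u hu)).2 (num_lt_den' u hu)⟩
  have hgtop : Filter.Tendsto (fun u : ℝ => deriv h u / h u) Filter.atTop (nhds 1) := by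
    refine gtopAux'.congr' ?_
    filter_upwards [Filter.eventually_ne_atTop (0:ℝ)] with x hx
    exact (g_eq' h hdef x hx).symm
  have hgbot : Filter.Tendsto (fun u : ℝ => deriv h u / h u) Filter.atBot (nhds 0) := by
    refine gbotAux'.congr' ?_
    filter_upwards [Filter.eventually_ne_atBot (0:ℝ)] with x hx
    exact (g_eq' h hdef x hx).symm
  refine ⟨hg0, hmono, fun u _ => hmem u, hmono.injective.injOn, ?_⟩
  intro y hy
  obtain ⟨a, ha⟩ := (hgbot.eventually_lt_const hy.1).exists
  obtain ⟨b, hb⟩ := (hgtop.eventually_const_lt hy.2).exists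
  have hab : a ≤ b := by
    by_contra hc
    push_neg at hc
    have := hmono hc
    simp only at this ha hb
    linarith
  obtain ⟨x, _, hx⟩ := intermediate_value_Icc hab hcont.continuousOn ⟨ha.le, hb.le⟩
  exact ⟨x, trivial, hx⟩
end

section
/- Suppose positive reals (a_n) satisfy max_{1≤i≤n} a_i / ∑_{i=1}^n A_i^{-1}a_i² → 0, where A_i = a_1+⋯+a_i, and ∑_{i=1}^n A_i^{-1}a_i² → ∞. Let D_n = ∑_{i=1}^n a_i V_i 1{U_i ≤ a_i/A_i} with U_i, V_i i.i.d. uniform(0,1). Then D_n / ∑_{i=1}^n A_i^{-1}a_i² → 1/2 in probability. -/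
open MeasureTheory ProbabilityTheory Filter

lemma aux_int_id : ∫ x in Set.Ioo (0:ℝ) 1, x = 1/2 := by
  rw [← integral_Ioc_eq_integral_Ioo, ← intervalIntegral.integral_of_le zero_le_one]
  simp

lemma aux_int_sq : ∫ x in Set.Ioo (0:ℝ) 1, x ^ 2 = 1/3 := by
  rw [← integral_Ioc_eq_integral_Ioo, ← intervalIntegral.integral_of_le zero_le_one,
    integral_pow]
  norm_num

lemma aux_meas_Iic {p : ℝ} (hp0 : 0 < p) (hp1 : p ≤ 1) :
    (volume.restrict (Set.Ioo (0:ℝ) 1)) (Set.Iic p) = ENNReal.ofReal p := by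
  rw [Measure.restrict_apply measurableSet_Iic]
  apply le_antisymm
  · calc volume (Set.Iic p ∩ Set.Ioo 0 1) ≤ volume (Set.Ioc 0 p) := by
          apply measure_mono; rintro x ⟨hx1, hx2, _⟩; exact ⟨hx2, hx1⟩
      _ = ENNReal.ofReal p := by simp
  · calc ENNReal.ofReal p = volume (Set.Ioo 0 p) := by simp
      _ ≤ volume (Set.Iic p ∩ Set.Ioo 0 1) := by
          apply measure_mono; rintro x ⟨hx1, hx2⟩
          exact ⟨hx2.le, hx1, lt_of_lt_of_le hx2 hp1⟩

lemma aux_le_biSup {s : Finset ℕ} {a : ℕ → ℝ} {i : ℕ} (hi : i ∈ s) :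
    a i ≤ ⨆ j ∈ s, a j := by
  classical
  have hbdd : BddAbove (Set.range fun j => ⨆ _ : j ∈ s, a j) := by
    refine ⟨(s.sup' ⟨i, hi⟩ a) ⊔ 0, ?_⟩
    rintro x ⟨j, rfl⟩
    by_cases hj : j ∈ s
    · simp only []
      rw [ciSup_pos (f := fun _ => a j) hj]
      exact le_sup_of_le_left (Finset.le_sup' a hj)
    · haveI : IsEmpty (j ∈ s) := ⟨hj⟩
      simp only []
      rw [Real.iSup_of_isEmpty]; exact le_sup_right
  calc a i = ⨆ _ : i ∈ s, a i := (ciSup_pos (f := fun _ => a i) hi).symm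
    _ ≤ ⨆ j ∈ s, a j := le_ciSup hbdd i

lemma aux_key {Ω : Type*} [MeasureSpace Ω] [IsProbabilityMeasure (ℙ : Measure Ω)]
    (W T : Ω → ℝ) (hWm : Measurable W) (hTm : Measurable T)
    (hW : Measure.map W ℙ = volume.restrict (Set.Ioo (0:ℝ) 1))
    (hT : Measure.map T ℙ = volume.restrict (Set.Ioo (0:ℝ) 1))
    (hind : IndepFun W T ℙ) (c p : ℝ) (hc : 0 < c) (hp0 : 0 < p) (hp1 : p ≤ 1) :
    MemLp (fun ω => c * W ω * (if T ω ≤ p then (1:ℝ) else 0)) 2 ℙ ∧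
    (∫ ω, c * W ω * (if T ω ≤ p then (1:ℝ) else 0) ∂ℙ) = c * p / 2 ∧
    variance (fun ω => c * W ω * (if T ω ≤ p then (1:ℝ) else 0)) ℙ ≤ c ^ 2 * p / 3 := by
  have hWae : ∀ᵐ ω ∂(ℙ : Measure Ω), W ω ∈ Set.Ioo (0:ℝ) 1 := by
    have h0 : (ℙ : Measure Ω) (W ⁻¹' (Set.Ioo (0:ℝ) 1)ᶜ) = 0 := by
      rw [← Measure.map_apply hWm measurableSet_Ioo.compl, hW,
        Measure.restrict_apply measurableSet_Ioo.compl]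
      simp
    rw [ae_iff]
    exact h0
  have hindm : Measurable (fun ω => if T ω ≤ p then (1:ℝ) else 0) :=
    Measurable.ite (measurableSet_le hTm measurable_const) measurable_const measurable_const
  have hZm : Measurable (fun ω => c * W ω * (if T ω ≤ p then (1:ℝ) else 0)) :=
    (measurable_const.mul hWm).mul hindm
  have hbound : ∀ᵐ ω ∂(ℙ : Measure Ω),
      ‖c * W ω * (if T ω ≤ p then (1:ℝ) else 0)‖ ≤ c := by
    filter_upwards [hWae] with ω hω
    rw [Real.norm_eq_abs, abs_mul, abs_mul]
    have h1 : |W ω| ≤ 1 := by rw [abs_le]; constructor <;> [linarith [hω.1]; exact hω.2.le]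
    have h2 : |if T ω ≤ p then (1:ℝ) else 0| ≤ 1 := by split_ifs <;> simp
    calc |c| * |W ω| * |if T ω ≤ p then (1:ℝ) else 0| ≤ |c| * 1 * 1 := by
          apply mul_le_mul (mul_le_mul le_rfl h1 (abs_nonneg _) (abs_nonneg _)) h2 (abs_nonneg _)
          positivity
      _ = c := by rw [abs_of_pos hc]; ring
  have hZ2 : MemLp (fun ω => c * W ω * (if T ω ≤ p then (1:ℝ) else 0)) 2 ℙ :=
    MemLp.of_bound hZm.aestronglyMeasurable c hbound
  have hEind : ∫ ω, (if T ω ≤ p then (1:ℝ) else 0) ∂ℙ = p := by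
    have heq : (fun ω => if T ω ≤ p then (1:ℝ) else 0)
        = fun ω => Set.indicator (Set.Iic p) (fun _ => (1:ℝ)) (T ω) := by
      funext ω; simp [Set.indicator_apply, Set.mem_Iic]
    rw [heq, ← integral_map hTm.aemeasurable
      ((stronglyMeasurable_const.indicator measurableSet_Iic).aestronglyMeasurable), hT,
      integral_indicator_const _ measurableSet_Iic, measureReal_def, aux_meas_Iic hp0 hp1, smul_eq_mul,
      ENNReal.toReal_ofReal hp0.le, mul_one]
  have hEW : ∫ ω, W ω ∂ℙ = 1/2 := by
    have : ∫ ω, W ω ∂(ℙ : Measure Ω) = ∫ x, x ∂(Measure.map W ℙ) :=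
      (integral_map hWm.aemeasurable aestronglyMeasurable_id).symm
    rw [this, hW, aux_int_id]
  have hEW2 : ∫ ω, (W ω) ^ 2 ∂ℙ = 1/3 := by
    have : ∫ ω, (W ω) ^ 2 ∂(ℙ : Measure Ω) = ∫ x, x ^ 2 ∂(Measure.map W ℙ) :=
      (integral_map hWm.aemeasurable
        (measurable_id.pow_const 2).aestronglyMeasurable).symm
    rw [this, hW, aux_int_sq]
  have hind1 : IndepFun W (fun ω => if T ω ≤ p then (1:ℝ) else 0) ℙ :=
    hind.comp measurable_id
      (Measurable.ite (measurableSet_le measurable_id measurable_const)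
        measurable_const measurable_const)
  have hind2 : IndepFun (fun ω => (W ω) ^ 2) (fun ω => if T ω ≤ p then (1:ℝ) else 0) ℙ :=
    hind.comp (measurable_id.pow_const 2)
      (Measurable.ite (measurableSet_le measurable_id measurable_const)
        measurable_const measurable_const)
  have hEZ : (∫ ω, c * W ω * (if T ω ≤ p then (1:ℝ) else 0) ∂ℙ) = c * p / 2 := by
    have : (∫ ω, c * W ω * (if T ω ≤ p then (1:ℝ) else 0) ∂ℙ)
        = c * ∫ ω, W ω * (if T ω ≤ p then (1:ℝ) else 0) ∂ℙ := by
      rw [← integral_const_mul]; congr 1; funext ω; ring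
    rw [this, hind1.integral_fun_mul_eq_mul_integral hWm.aestronglyMeasurable hindm.aestronglyMeasurable,
      hEW, hEind]
    ring
  have hEZ2 : (∫ ω, (c * W ω * (if T ω ≤ p then (1:ℝ) else 0)) ^ 2 ∂ℙ) = c ^ 2 * p / 3 := by
    have heq : (fun ω => (c * W ω * (if T ω ≤ p then (1:ℝ) else 0)) ^ 2)
        = fun ω => c ^ 2 * ((W ω) ^ 2 * (if T ω ≤ p then (1:ℝ) else 0)) := by
      funext ω; split_ifs <;> ring
    rw [heq, integral_const_mul,
      hind2.integral_fun_mul_eq_mul_integral (hWm.pow_const 2).aestronglyMeasurable hindm.aestronglyMeasurable,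
      hEW2, hEind]
    ring
  refine ⟨hZ2, hEZ, ?_⟩
  rw [variance_eq_sub hZ2]
  have h1 : (ℙ : Measure Ω)[(fun ω => c * W ω * (if T ω ≤ p then (1:ℝ) else 0)) ^ 2]
      = c ^ 2 * p / 3 := by
    rw [← hEZ2]; congr 1
  rw [h1]
  have : (0:ℝ) ≤ ((ℙ : Measure Ω)[fun ω => c * W ω * (if T ω ≤ p then (1:ℝ) else 0)]) ^ 2 :=
    sq_nonneg _
  linarith

theorem stmt_14 (Ω : Type*) [MeasureSpace Ω] [IsProbabilityMeasure (ℙ : Measure Ω)]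
    (a : ℕ → ℝ) (ha : ∀ i, 1 ≤ i → 0 < a i)
    (A : ℕ → ℝ) (hA : ∀ n, A n = ∑ i ∈ Finset.Icc 1 n, a i)
    (S : ℕ → ℝ) (hS : ∀ n, S n = ∑ i ∈ Finset.Icc 1 n, (a i) ^ 2 / A i)
    (hmax : Tendsto (fun n : ℕ => (⨆ i ∈ Finset.Icc 1 n, a i) / S n) atTop (nhds 0))
    (hdiv : Tendsto S atTop atTop)
    (U V : ℕ → Ω → ℝ)
    (hIndep : iIndepFun (m := fun _ : ℕ × Bool => (inferInstance : MeasurableSpace ℝ))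
      (fun p : ℕ × Bool => if p.2 then U p.1 else V p.1) ℙ)
    (hU : ∀ i, Measure.map (U i) ℙ = volume.restrict (Set.Ioo (0:ℝ) 1))
    (hV : ∀ i, Measure.map (V i) ℙ = volume.restrict (Set.Ioo (0:ℝ) 1))
    (hUm : ∀ i, Measurable (U i)) (hVm : ∀ i, Measurable (V i))
    (D : ℕ → Ω → ℝ)
    (hD : ∀ n ω, D n ω =
      ∑ i ∈ Finset.Icc 1 n, a i * V i ω * (if U i ω ≤ a i / A i then (1:ℝ) else 0)) :
    ∀ ε : ℝ, 0 < ε →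
      Tendsto (fun n : ℕ => (ℙ {ω | ε < |D n ω / S n - 1 / 2|}).toReal) atTop (nhds 0) := by
  classical
  intro ε hε
  have hApos : ∀ i, 1 ≤ i → 0 < A i := by
    intro i hi
    rw [hA]
    apply Finset.sum_pos
    · intro j hj; exact ha j (Finset.mem_Icc.mp hj).1
    · exact ⟨1, Finset.mem_Icc.mpr ⟨le_rfl, hi⟩⟩
  have haA : ∀ i, 1 ≤ i → a i ≤ A i := by
    intro i hi
    rw [hA]
    exact Finset.single_le_sum (f := a) (fun j hj => (ha j (Finset.mem_Icc.mp hj).1).le)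
      (Finset.mem_Icc.mpr ⟨hi, le_rfl⟩)
  have hp0 : ∀ i, 1 ≤ i → 0 < a i / A i := fun i hi => div_pos (ha i hi) (hApos i hi)
  have hp1 : ∀ i, 1 ≤ i → a i / A i ≤ 1 := fun i hi =>
    (div_le_one (hApos i hi)).mpr (haA i hi)
  have hfm : ∀ q : ℕ × Bool, Measurable (if q.2 then U q.1 else V q.1) := by
    rintro ⟨i, b⟩
    cases b
    · simpa using hVm i
    · simpa using hUm i
  have hVU : ∀ i, IndepFun (V i) (U i) ℙ := by
    intro i
    have h := hIndep.indepFun (show ((i, false) : ℕ × Bool) ≠ (i, true) by simp)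
    simpa using h
  have hkey : ∀ i, 1 ≤ i →
      MemLp (fun ω => a i * V i ω * (if U i ω ≤ a i / A i then (1:ℝ) else 0)) 2 ℙ ∧
      (∫ ω, a i * V i ω * (if U i ω ≤ a i / A i then (1:ℝ) else 0) ∂ℙ)
        = a i * (a i / A i) / 2 ∧
      variance (fun ω => a i * V i ω * (if U i ω ≤ a i / A i then (1:ℝ) else 0)) ℙ
        ≤ (a i) ^ 2 * (a i / A i) / 3 :=
    fun i hi => aux_key (V i) (U i) (hVm i) (hUm i) (hV i) (hU i) (hVU i) (a i) (a i / A i)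
      (ha i hi) (hp0 i hi) (hp1 i hi)
  have hpair : ∀ i j : ℕ, i ≠ j →
      IndepFun (fun ω => a i * V i ω * (if U i ω ≤ a i / A i then (1:ℝ) else 0))
               (fun ω => a j * V j ω * (if U j ω ≤ a j / A j then (1:ℝ) else 0)) ℙ := by
    intro i j hij
    have base := hIndep.indepFun_prodMk_prodMk hfm (i, false) (i, true) (j, false) (j, true)
      (by simp [hij]) (by simp [hij]) (by simp [hij]) (by simp [hij])
    have base' : IndepFun (fun ω => (V i ω, U i ω)) (fun ω => (V j ω, U j ω)) ℙ := by
      simpa using base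
    have hφ : ∀ k : ℕ, Measurable
        (fun q : ℝ × ℝ => a k * q.1 * (if q.2 ≤ a k / A k then (1:ℝ) else 0)) := fun k =>
      (measurable_const.mul measurable_fst).mul
        (Measurable.ite (measurableSet_le measurable_snd measurable_const)
          measurable_const measurable_const)
    exact base'.comp (hφ i) (hφ j)
  have hDsum : ∀ n, D n = ∑ i ∈ Finset.Icc 1 n,
      (fun ω => a i * V i ω * (if U i ω ≤ a i / A i then (1:ℝ) else 0)) := by
    intro n; funext ω; rw [hD, Finset.sum_apply]
  have hD2 : ∀ n, MemLp (D n) 2 ℙ := by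
    intro n
    rw [hDsum n]
    exact memLp_finsetSum' _ (fun i hi => (hkey i (Finset.mem_Icc.mp hi).1).1)
  have hED : ∀ n, (∫ ω, D n ω ∂ℙ) = S n / 2 := by
    intro n
    calc ∫ ω, D n ω ∂ℙ
        = ∫ ω, ∑ i ∈ Finset.Icc 1 n,
            a i * V i ω * (if U i ω ≤ a i / A i then (1:ℝ) else 0) ∂ℙ := by
          apply integral_congr_ae; filter_upwards with ω; rw [hD]
      _ = ∑ i ∈ Finset.Icc 1 n,
            ∫ ω, a i * V i ω * (if U i ω ≤ a i / A i then (1:ℝ) else 0) ∂ℙ :=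
          integral_finset_sum _ (fun i hi =>
            ((hkey i (Finset.mem_Icc.mp hi).1).1).integrable one_le_two)
      _ = ∑ i ∈ Finset.Icc 1 n, a i * (a i / A i) / 2 :=
          Finset.sum_congr rfl (fun i hi => (hkey i (Finset.mem_Icc.mp hi).1).2.1)
      _ = S n / 2 := by
          rw [hS, Finset.sum_div]
          exact Finset.sum_congr rfl (fun i hi => by ring)
  have hVarD : ∀ n, variance (D n) ℙ ≤ ((⨆ i ∈ Finset.Icc 1 n, a i) / 3) * S n := by
    intro n
    have h1 : variance (D n) ℙ = ∑ i ∈ Finset.Icc 1 n,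
        variance (fun ω => a i * V i ω * (if U i ω ≤ a i / A i then (1:ℝ) else 0)) ℙ := by
      rw [hDsum n]
      exact IndepFun.variance_sum (fun i hi => (hkey i (Finset.mem_Icc.mp hi).1).1)
        (fun i _ j _ hij => hpair i j hij)
    rw [h1, hS, Finset.mul_sum]
    apply Finset.sum_le_sum
    intro i hi
    have hi1 := (Finset.mem_Icc.mp hi).1
    calc variance (fun ω => a i * V i ω * (if U i ω ≤ a i / A i then (1:ℝ) else 0)) ℙ
        ≤ (a i) ^ 2 * (a i / A i) / 3 := (hkey i hi1).2.2
      _ = (a i / 3) * ((a i) ^ 2 / A i) := by ring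
      _ ≤ ((⨆ i ∈ Finset.Icc 1 n, a i) / 3) * ((a i) ^ 2 / A i) := by
          apply mul_le_mul_of_nonneg_right
          · have := aux_le_biSup (a := a) hi; linarith
          · exact div_nonneg (sq_nonneg _) (hApos i hi1).le
  have hev : ∀ᶠ n in atTop,
      (ℙ {ω | ε < |D n ω / S n - 1/2|}).toReal
        ≤ 1/(3*ε^2) * ((⨆ i ∈ Finset.Icc 1 n, a i) / S n) := by
    filter_upwards [hdiv.eventually_ge_atTop 1] with n hSn
    have hS0 : (0:ℝ) < S n := lt_of_lt_of_le one_pos hSn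
    have hsub : {ω | ε < |D n ω / S n - 1/2|}
        ⊆ {ω | ε * S n ≤ |D n ω - ∫ x, D n x ∂ℙ|} := by
      intro ω hω
      simp only [Set.mem_setOf_eq] at hω ⊢
      rw [hED n]
      have heq : D n ω / S n - 1/2 = (D n ω - S n / 2) / S n := by
        field_simp
      rw [heq, abs_div, abs_of_pos hS0] at hω
      have := (lt_div_iff₀ hS0).mp hω
      linarith
    have hcheb := meas_ge_le_variance_div_sq (X := D n) (hD2 n) (mul_pos hε hS0)
    have hq0 : (0:ℝ) ≤ variance (D n) ℙ / (ε * S n)^2 :=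
      div_nonneg (variance_nonneg _ _) (sq_nonneg _)
    calc (ℙ {ω | ε < |D n ω / S n - 1/2|}).toReal
        ≤ (ℙ {ω | ε * S n ≤ |D n ω - ∫ x, D n x ∂ℙ|}).toReal :=
          ENNReal.toReal_mono (measure_ne_top _ _) (measure_mono hsub)
      _ ≤ (ENNReal.ofReal (variance (D n) ℙ / (ε * S n)^2)).toReal :=
          ENNReal.toReal_mono ENNReal.ofReal_ne_top hcheb
      _ = variance (D n) ℙ / (ε * S n)^2 := ENNReal.toReal_ofReal hq0
      _ ≤ (((⨆ i ∈ Finset.Icc 1 n, a i) / 3) * S n) / (ε * S n)^2 :=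
          (div_le_div_iff_of_pos_right (by positivity)).mpr (hVarD n)
      _ = 1/(3*ε^2) * ((⨆ i ∈ Finset.Icc 1 n, a i) / S n) := by
          field_simp
  have hlim : Tendsto
      (fun n => 1/(3*ε^2) * ((⨆ i ∈ Finset.Icc 1 n, a i) / S n)) atTop (nhds 0) := by
    have := hmax.const_mul (1/(3*ε^2))
    simpa using this
  exact squeeze_zero' (Eventually.of_forall fun n => ENNReal.toReal_nonneg) hev hlim
end
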